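/- arXiv:0804.0429 — 9 statements merged into one kernel-verified Lean document; each statement's English description precedes it below -/
import Mathlib

section
/- Let R be a ring, M a left R-module, φ an R-endomorphism of M, and suppose {x_{γ,i}} is a nilpotent Jordan normal base of M with respect to φ. Then the kernel of φ equals the direct sum ⊕_{γ∈Γ} R·x_{γ,k_γ} of the submodules generated by the last element of each block. -/
open Polynomial

/-- A nilpotent Jordan normal base of the left `R`-module `M` with respect to the
endomorphism `φ`: a family `x γ i` (`γ ∈ Γ`, `0 ≤ i < k γ`, 0-based indexing) such that
each `R • x γ i` is a simple submodule, `M` is the internal direct sum of these submodules,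
`φ` shifts within each block (annihilating the last element, i.e. `x γ i = 0` for `i ≥ k γ`),
and the block sizes `k γ` are bounded. -/
structure IsNilpotentJordanBase {R : Type*} [Ring R] {M : Type*} [AddCommGroup M] [Module R M]
    (φ : Module.End R M) {Γ : Type*} (k : Γ → ℕ) (x : Γ → ℕ → M) : Prop where
  k_pos : ∀ γ, 1 ≤ k γ
  simple : ∀ γ, ∀ i < k γ, IsSimpleModule R ↥(Submodule.span R {x γ i})
  indep : iSupIndep fun p : Σ γ : Γ, Fin (k γ) => Submodule.span R {x p.1 p.2.val}
  spans : (⨆ p : Σ γ : Γ, Fin (k γ), Submodule.span R {x p.1 p.2.val}) = ⊤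
  step : ∀ γ i, φ (x γ i) = x γ (i + 1)
  zero_after : ∀ γ i, k γ ≤ i → x γ i = 0
  bounded : ∃ n, ∀ γ, k γ ≤ n

/-- The kernel of `φ` is the direct sum `⊕_{γ∈Γ} R·x_{γ,k_γ}` of the submodules generated by
the last element of each block (0-based: `x γ (k γ - 1)`). -/
theorem stmt_1 {R : Type*} [Ring R] {M : Type*} [AddCommGroup M] [Module R M]
    (φ : Module.End R M) {Γ : Type*} (k : Γ → ℕ) (x : Γ → ℕ → M)
    (h : IsNilpotentJordanBase φ k x) :
    LinearMap.ker φ = (⨆ γ : Γ, Submodule.span R {x γ (k γ - 1)}) ∧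
      iSupIndep fun γ : Γ => Submodule.span R {x γ (k γ - 1)} := by
  classical
  set ι := Σ γ : Γ, Fin (k γ) with hι
  set N : ι → Submodule R M := fun p => Submodule.span R {x p.1 p.2.val} with hN
  -- the "last" index of each block
  have hlast : ∀ γ, k γ - 1 < k γ := fun γ => Nat.sub_lt (h.k_pos γ) one_pos
  -- last elements are in the kernel
  have hker_last : ∀ γ, φ (x γ (k γ - 1)) = 0 := by
    intro γ
    rw [h.step]
    exact h.zero_after γ _ (by omega)
  -- φ maps span {x γ i} into span {x γ (i+1)}
  have hmap : ∀ γ (i : ℕ) (v : M), v ∈ Submodule.span R {x γ i} →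
      φ v ∈ Submodule.span R {x γ (i + 1)} := by
    intro γ i v hv
    have : φ v ∈ Submodule.map φ (Submodule.span R {x γ i}) :=
      Submodule.mem_map_of_mem hv
    rwa [Submodule.map_span, Set.image_singleton, h.step] at this
  -- key injectivity: for i+1 < k γ, φ is injective on span {x γ i}
  have hinj : ∀ γ (i : ℕ), i + 1 < k γ → ∀ v ∈ Submodule.span R {x γ i}, φ v = 0 → v = 0 := by
    intro γ i hi v hv hφv
    have hsimple := h.simple γ i (by omega)
    set S := Submodule.span R {x γ i}
    have := hsimple.1.2 (Submodule.comap S.subtype (LinearMap.ker φ))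
    rcases this with hb | ht
    · have : (⟨v, hv⟩ : S) ∈ Submodule.comap S.subtype (LinearMap.ker φ) := by
        simpa using hφv
      rw [hb] at this
      simpa using congrArg Subtype.val this
    · exfalso
      have hx : (⟨x γ i, Submodule.mem_span_singleton_self _⟩ : S) ∈
          Submodule.comap S.subtype (LinearMap.ker φ) := by rw [ht]; trivial
      have hxz : x γ (i + 1) = 0 := by
        have := hx
        simp only [Submodule.mem_comap, LinearMap.mem_ker, Submodule.coe_subtype] at this
        rwa [h.step] at this
      have hsimple' := h.simple γ (i + 1) hi
      have hnt : Nontrivial ↥(Submodule.span R {x γ (i + 1)}) :=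
        IsSimpleModule.nontrivial R _
      rw [hxz, Submodule.span_zero_singleton] at hnt
      exact (not_subsingleton_iff_nontrivial.mpr hnt) inferInstance
  -- finset-sum consequence of independence
  have hsum0 : ∀ (s : Finset ι) (f : ι → M), (∀ p ∈ s, f p ∈ N p) →
      (∑ p ∈ s, f p) = 0 → ∀ p ∈ s, f p = 0 := by
    intro s f hf hsum p hp
    have hdisj : Disjoint (N p) (⨆ (q) (_ : q ≠ p), N q) := iSupIndep_def.mp h.indep p
    have h1 : f p ∈ N p := hf p hp
    have h2 : f p ∈ ⨆ (q) (_ : q ≠ p), N q := by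
      have : f p = -∑ q ∈ s.erase p, f q := by
        have h3 := Finset.add_sum_erase s f hp
        rw [hsum] at h3
        exact eq_neg_of_add_eq_zero_left h3
      rw [this]
      refine neg_mem (Submodule.sum_mem _ fun q hq => ?_)
      have hqp : q ≠ p := (Finset.mem_erase.mp hq).1
      exact Submodule.mem_iSup_of_mem q (Submodule.mem_iSup_of_mem hqp
        (hf q (Finset.mem_of_mem_erase hq)))
    exact (Submodule.mem_bot R).mp (hdisj.le_bot ⟨h1, h2⟩)
  constructor
  · apply le_antisymm
    · -- ker φ ≤ ⨆ γ, span {x γ (k γ - 1)}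
      intro m hm
      have hmT : m ∈ ⨆ p : ι, N p := by rw [h.spans]; trivial
      rw [Submodule.mem_iSup_iff_exists_dfinsupp'] at hmT
      obtain ⟨f, hf⟩ := hmT
      -- support indices with non-last position
      set s' : Finset ι := f.support.filter (fun p => p.2.val + 1 < k p.1) with hs'
      -- φ (f p) = 0 for last positions
      have hlastzero : ∀ p : ι, ¬ p.2.val + 1 < k p.1 → φ ((f p : M)) = 0 := by
        intro p hp
        have : (f p : M) ∈ N p := (f p).2
        have h2 := hmap p.1 p.2.val _ this
        have hkp : p.2.val + 1 = k p.1 := by omega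
        have : x p.1 (p.2.val + 1) = 0 := h.zero_after _ _ (by omega)
        rw [this, Submodule.span_zero_singleton, Submodule.mem_bot] at h2
        exact h2
      -- total sum of φ (f p) is zero
      have hφsum : (∑ p ∈ f.support, φ ((f p : M))) = 0 := by
        have : φ m = 0 := hm
        rw [← hf] at this
        rw [DFinsupp.sum] at this
        rw [← this]
        exact (map_sum φ _ _).symm
      have hφsum' : (∑ p ∈ s', φ ((f p : M))) = 0 := by
        rw [hs', Finset.sum_filter_of_ne (fun p _ hne => by
          by_contra hc
          exact hne (hlastzero p hc))]
        exact hφsum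
      -- reindex via successor
      have succ_mem : ∀ p : ι, p.2.val + 1 < k p.1 → p.2.val + 1 < k p.1 := fun _ h => h
      set succ : ∀ p : ι, p.2.val + 1 < k p.1 → ι :=
        fun p hp => ⟨p.1, ⟨p.2.val + 1, hp⟩⟩ with hsucc
      -- define F on image
      set t : Finset ι := s'.attach.image (fun q => succ q.1 (by
        have := q.2; simp only [hs', Finset.mem_filter] at this; exact this.2)) with ht
      set F : ι → M := fun q =>
        if hq : 1 ≤ q.2.val then φ ((f ⟨q.1, ⟨q.2.val - 1, by omega⟩⟩ : M)) else 0 with hF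
      have hFt : ∀ q ∈ t, F q ∈ N q := by
        intro q hq
        rw [ht, Finset.mem_image] at hq
        obtain ⟨⟨p, hp⟩, -, rfl⟩ := hq
        simp only [hF, hsucc]
        rw [dif_pos (Nat.succ_le_succ (Nat.zero_le _))]
        exact hmap p.1 p.2.val _ (f ⟨p.1, ⟨p.2.val, p.2.isLt⟩⟩).2
      have hFsum : (∑ q ∈ t, F q) = 0 := by
        rw [ht, Finset.sum_image (by
          rintro ⟨⟨γ1, i1⟩, h1⟩ - ⟨⟨γ2, i2⟩, h2⟩ - heq
          simp only [hsucc] at heq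
          obtain rfl : γ1 = γ2 := congrArg Sigma.fst heq
          obtain rfl : i1 = i2 := by
            have hv := congrArg Fin.val (eq_of_heq (Sigma.mk.inj_iff.mp heq).2)
            have hv' : i1.val + 1 = i2.val + 1 := hv
            exact Fin.ext (by omega)
          rfl)]
        rw [← hφsum']
        rw [← Finset.sum_attach s' (fun p => φ ((f p : M)))]
        apply Finset.sum_congr rfl
        rintro ⟨p, hp⟩ -
        simp only [hF, hsucc]
        rw [dif_pos (Nat.succ_le_succ (Nat.zero_le _))]
        rfl
      have hFzero := hsum0 t F hFt hFsum
      -- so φ (f p) = 0 for all p ∈ s', hence f p = 0, hence s' = ∅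
      have hs'empty : s' = ∅ := by
        by_contra hne
        obtain ⟨p, hp⟩ := Finset.nonempty_of_ne_empty hne
        have hpk : p.2.val + 1 < k p.1 := (Finset.mem_filter.mp hp).2
        have hpsupp : p ∈ f.support := (Finset.mem_filter.mp hp).1
        have hFp : F (succ p hpk) = 0 := by
          apply hFzero
          rw [ht, Finset.mem_image]
          exact ⟨⟨p, hp⟩, Finset.mem_attach _ _, rfl⟩
        have hφfp : φ ((f p : M)) = 0 := by
          simp only [hF, hsucc] at hFp
          rw [dif_pos (Nat.succ_le_succ (Nat.zero_le _))] at hFp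
          exact hFp
        have : (f p : M) = 0 := hinj p.1 p.2.val hpk _ (f p).2 hφfp
        have : f p = 0 := Subtype.ext this
        exact (DFinsupp.mem_support_iff.mp hpsupp) this
      -- all support indices are last positions
      rw [← hf, DFinsupp.sum]
      apply Submodule.sum_mem
      intro p hp
      have hpk : ¬ p.2.val + 1 < k p.1 := by
        intro hlt
        have : p ∈ s' := Finset.mem_filter.mpr ⟨hp, hlt⟩
        rw [hs'empty] at this
        exact absurd this (Finset.notMem_empty p)
      have hpeq : p.2.val = k p.1 - 1 := by have := p.2.isLt; omega
      refine Submodule.mem_iSup_of_mem p.1 ?_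
      have hmem : (f p : M) ∈ N p := (f p).2
      rw [show k p.1 - 1 = p.2.val from hpeq.symm]
      exact hmem
    · -- ⨆ γ, span {x γ (k γ - 1)} ≤ ker φ
      apply iSup_le
      intro γ
      rw [Submodule.span_le]
      intro v hv
      simp only [Set.mem_singleton_iff] at hv
      subst hv
      exact LinearMap.mem_ker.mpr (hker_last γ)
  · -- independence
    have hinj' : Function.Injective (fun γ : Γ => (⟨γ, ⟨k γ - 1, hlast γ⟩⟩ : ι)) := by
      intro γ1 γ2 heq
      exact congrArg Sigma.fst heq
    have := h.indep.comp hinj'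
    exact this
end

section
/- Let φ be a nilpotent R-endomorphism of a finitely generated semisimple left R-module M. If {x_{γ,i} | γ∈Γ, 1≤i≤k_γ} and {y_{δ,j} | δ∈Δ, 1≤j≤l_δ} are two nilpotent Jordan normal bases of M with respect to φ, then there is a bijection π: Γ → Δ with k_γ = l_{π(γ)} for all γ; i.e., the multiset of block sizes is uniquely determined. -/
open Polynomial


namespace JordanAux

variable {R : Type*} [Ring R] {M : Type*} [AddCommGroup M] [Module R M]

lemma exists_compSeries {n : ℕ} (S : Fin n → Submodule R M)
    (hind : iSupIndep S) (hatom : ∀ i, IsAtom (S i)) :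
    ∃ s : CompositionSeries (Submodule R M),
      s.length = n ∧ s.head = ⊥ ∧ s.last = ⨆ i, S i := by
  have key : ∀ m : Fin n,
      (⨆ i : Fin n, ⨆ _ : (i : ℕ) < ((m.succ : Fin (n+1)) : ℕ), S i)
        = S m ⊔ ⨆ i : Fin n, ⨆ _ : (i : ℕ) < ((m.castSucc : Fin (n+1)) : ℕ), S i := by
    intro m
    apply le_antisymm
    · refine iSup_le fun i => iSup_le fun hi => ?_
      simp only [Fin.val_succ] at hi
      rcases Nat.lt_succ_iff_lt_or_eq.mp hi with h | h
      · exact le_sup_of_le_right (le_iSup₂_of_le i (by simpa using h) le_rfl)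
      · have : i = m := Fin.val_injective h
        subst this
        exact le_sup_left
    · refine sup_le ?_ ?_
      · exact le_iSup₂_of_le m (by simp [Nat.lt_succ_self]) le_rfl
      · refine iSup_le fun i => iSup_le fun hi => ?_
        refine le_iSup₂_of_le i ?_ le_rfl
        simp only [Fin.coe_castSucc] at hi
        simp only [Fin.val_succ]
        omega
  refine ⟨⟨n, fun m => ⨆ i : Fin n, ⨆ _ : (i : ℕ) < (m : ℕ), S i, fun m => ?_⟩, rfl, ?_, ?_⟩
  · dsimp only
    have hdisj : Disjoint (S m)
        (⨆ i : Fin n, ⨆ _ : (i : ℕ) < ((m.castSucc : Fin (n+1)) : ℕ), S i) := by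
      refine (hind m).mono_right ?_
      refine iSup_le fun i => iSup_le fun hi => ?_
      have hne : i ≠ m := by
        simp only [Fin.coe_castSucc] at hi
        exact Fin.ne_of_val_ne (Nat.ne_of_lt hi)
      exact le_iSup₂_of_le i hne le_rfl
    have hcov : S m ⊓ (⨆ i : Fin n, ⨆ _ : (i : ℕ) < ((m.castSucc : Fin (n+1)) : ℕ), S i) ⋖ S m := by
      rw [disjoint_iff.mp hdisj]
      exact (hatom m).bot_covBy
    have h2 := covBy_sup_of_inf_covBy_left hcov
    show (⨆ i : Fin n, ⨆ _ : (i : ℕ) < ((m.castSucc : Fin (n+1)) : ℕ), S i)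
        ⋖ (⨆ i : Fin n, ⨆ _ : (i : ℕ) < ((m.succ : Fin (n+1)) : ℕ), S i)
    rw [key m]
    exact h2
  · show (⨆ i : Fin n, ⨆ _ : (i : ℕ) < ((0 : Fin (n+1)) : ℕ), S i) = ⊥
    simp
  · show (⨆ i : Fin n, ⨆ _ : (i : ℕ) < ((Fin.last n) : ℕ), S i) = ⨆ i, S i
    simp [Fin.is_lt]

end JordanAux

namespace JordanAux2
open JordanAux

variable {R : Type*} [Ring R] {M : Type*} [AddCommGroup M] [Module R M]

lemma card_eq_of_indep_atoms {ι κ : Type*} [Fintype ι] [Fintype κ]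
    (S : ι → Submodule R M) (T : κ → Submodule R M)
    (hSind : iSupIndep S) (hSatom : ∀ i, IsAtom (S i))
    (hTind : iSupIndep T) (hTatom : ∀ j, IsAtom (T j))
    (h : ⨆ i, S i = ⨆ j, T j) : Fintype.card ι = Fintype.card κ := by
  obtain ⟨s₁, hl₁, hh₁, ht₁⟩ := exists_compSeries (fun i => S ((Fintype.equivFin ι).symm i))
      (hSind.comp (Equiv.injective _)) (fun i => hSatom _)
  obtain ⟨s₂, hl₂, hh₂, ht₂⟩ := exists_compSeries (fun j => T ((Fintype.equivFin κ).symm j))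
      (hTind.comp (Equiv.injective _)) (fun j => hTatom _)
  have hlast : s₁.last = s₂.last := by
    rw [ht₁, ht₂, Equiv.iSup_comp, Equiv.iSup_comp, h]
  obtain ⟨f, -⟩ := CompositionSeries.jordan_holder s₁ s₂ (hh₁.trans hh₂.symm) hlast
  have := Fintype.card_congr f
  simpa [hl₁, hl₂] using this

variable (φ : Module.End R M)

lemma pow_apply_base {Γ : Type*} {x : Γ → ℕ → M}
    (hstep : ∀ γ i, φ (x γ i) = x γ (i + 1)) (m : ℕ) (γ : Γ) (i : ℕ) :
    (φ ^ m) (x γ i) = x γ (i + m) := by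
  induction m with
  | zero => simp
  | succ m ih =>
      rw [pow_succ', Module.End.mul_apply, ih, hstep, ← Nat.add_assoc]

lemma map_pow_top {Γ : Type*} {k : Γ → ℕ} {x : Γ → ℕ → M}
    (hx : ∀ γ i, φ (x γ i) = x γ (i + 1))
    (hspan : (⨆ p : Σ γ : Γ, Fin (k γ), Submodule.span R {x p.1 p.2.val}) = ⊤)
    (hzero : ∀ γ i, k γ ≤ i → x γ i = 0) (m : ℕ) :
    Submodule.map (φ ^ m : M →ₗ[R] M) ⊤
      = ⨆ q : {p : Σ γ : Γ, Fin (k γ) // m ≤ (p.2 : ℕ)},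
          Submodule.span R {x q.1.1 q.1.2.val} := by
  have himg : ∀ p : Σ γ : Γ, Fin (k γ),
      Submodule.map (φ ^ m : M →ₗ[R] M) (Submodule.span R {x p.1 p.2.val})
        = Submodule.span R {x p.1 ((p.2 : ℕ) + m)} := fun p => by
    rw [Submodule.map_span, Set.image_singleton]
    exact congrArg _ (congrArg _ (pow_apply_base φ hx m p.1 p.2))
  conv_lhs => rw [← hspan]
  rw [Submodule.map_iSup]
  apply le_antisymm
  · refine iSup_le fun p => ?_
    rw [himg p]
    by_cases hlt : (p.2 : ℕ) + m < k p.1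
    · exact le_iSup_of_le ⟨⟨p.1, ⟨(p.2 : ℕ) + m, hlt⟩⟩, Nat.le_add_left m _⟩ le_rfl
    · rw [hzero p.1 _ (not_lt.mp hlt)]
      simp
  · refine iSup_le fun q => ?_
    obtain ⟨⟨γ, i⟩, hm⟩ := q
    refine le_iSup_of_le ⟨γ, ⟨(i : ℕ) - m, lt_of_le_of_lt (Nat.sub_le _ _) i.2⟩⟩ ?_
    rw [himg]
    simp only
    rw [Nat.sub_add_cancel hm]

end JordanAux2

namespace JordanAux3
open JordanAux JordanAux2

lemma natCard_eq_of_indep_atoms {R : Type*} [Ring R] {M : Type*} [AddCommGroup M] [Module R M]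
    {ι κ : Type*} [Finite ι] [Finite κ]
    (S : ι → Submodule R M) (T : κ → Submodule R M)
    (hSind : iSupIndep S) (hSatom : ∀ i, IsAtom (S i))
    (hTind : iSupIndep T) (hTatom : ∀ j, IsAtom (T j))
    (h : ⨆ i, S i = ⨆ j, T j) : Nat.card ι = Nat.card κ := by
  cases nonempty_fintype ι
  cases nonempty_fintype κ
  rw [Nat.card_eq_fintype_card, Nat.card_eq_fintype_card]
  exact card_eq_of_indep_atoms S T hSind hSatom hTind hTatom h

def fiberEquiv {Γ : Type*} (k : Γ → ℕ) (m : ℕ) :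
    {p : Σ γ : Γ, Fin (k γ) // (p.2 : ℕ) = m} ≃ {γ : Γ // m + 1 ≤ k γ} where
  toFun q := ⟨q.1.1, by have h2 := q.1.2.2; have h := q.2; omega⟩
  invFun g := ⟨⟨g.1, ⟨m, by have := g.2; omega⟩⟩, rfl⟩
  left_inv := by
    rintro ⟨⟨γ, i⟩, h⟩
    dsimp only at h
    subst h
    simp
  right_inv g := rfl

lemma card_le_split {α : Type*} [Finite α] (f : α → ℕ) (m : ℕ) :
    Nat.card {a // m ≤ f a} = Nat.card {a // m + 1 ≤ f a} + Nat.card {a // f a = m} := by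
  classical
  have hdisj : Disjoint (fun a => m + 1 ≤ f a) (fun a => f a = m) := by
    rw [Pi.disjoint_iff]
    intro a
    simp only [Prop.disjoint_iff]
    rintro ⟨h1, h2⟩
    omega
  calc Nat.card {a // m ≤ f a}
      = Nat.card {a // m + 1 ≤ f a ∨ f a = m} :=
        Nat.card_congr (Equiv.subtypeEquivRight fun a => by omega)
    _ = Nat.card ({a // m + 1 ≤ f a} ⊕ {a // f a = m}) :=
        Nat.card_congr (subtypeOrEquiv _ _ hdisj)
    _ = _ := Nat.card_sum

end JordanAux3


/-- Uniqueness of block sizes: if `{x_{γ,i}}` and `{y_{δ,j}}` are two nilpotent Jordan normal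
bases of the finitely generated semisimple module `M` with respect to the nilpotent
endomorphism `φ`, then there is a bijection `π : Γ → Δ` with `k γ = l (π γ)` for all `γ`. -/
theorem stmt_3 {R : Type*} [Ring R] {M : Type*} [AddCommGroup M] [Module R M]
    [Module.Finite R M] [IsSemisimpleModule R M]
    (φ : Module.End R M) (hφ : IsNilpotent φ)
    {Γ : Type*} (k : Γ → ℕ) (x : Γ → ℕ → M) (hx : IsNilpotentJordanBase φ k x)
    {Δ : Type*} (l : Δ → ℕ) (y : Δ → ℕ → M) (hy : IsNilpotentJordanBase φ l y) :
    ∃ π : Γ ≃ Δ, ∀ γ, k γ = l (π γ) := by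
  classical
  -- atoms
  have hatomx : ∀ p : Σ γ : Γ, Fin (k γ), IsAtom (Submodule.span R {x p.1 p.2.val}) :=
    fun p => isSimpleModule_iff_isAtom.mp (hx.simple p.1 p.2.val p.2.2)
  have hatomy : ∀ q : Σ δ : Δ, Fin (l δ), IsAtom (Submodule.span R {y q.1 q.2.val}) :=
    fun q => isSimpleModule_iff_isAtom.mp (hy.simple q.1 q.2.val q.2.2)
  -- finiteness
  have hPfin : Finite (Σ γ : Γ, Fin (k γ)) :=
    WellFoundedGT.finite_of_iSupIndep hx.indep fun p => (hatomx p).1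
  have hQfin : Finite (Σ δ : Δ, Fin (l δ)) :=
    WellFoundedGT.finite_of_iSupIndep hy.indep fun q => (hatomy q).1
  have hΓfin : Finite Γ :=
    Finite.of_injective (fun γ => (⟨γ, ⟨0, hx.k_pos γ⟩⟩ : Σ γ : Γ, Fin (k γ)))
      fun a b h => congrArg Sigma.fst h
  have hΔfin : Finite Δ :=
    Finite.of_injective (fun δ => (⟨δ, ⟨0, hy.k_pos δ⟩⟩ : Σ δ : Δ, Fin (l δ)))
      fun a b h => congrArg Sigma.fst h
  -- the basic invariant
  have hc : ∀ m : ℕ, Nat.card {p : Σ γ : Γ, Fin (k γ) // m ≤ (p.2 : ℕ)}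
      = Nat.card {q : Σ δ : Δ, Fin (l δ) // m ≤ (q.2 : ℕ)} := by
    intro m
    refine JordanAux3.natCard_eq_of_indep_atoms
      (fun p : {p : Σ γ : Γ, Fin (k γ) // m ≤ (p.2 : ℕ)} => Submodule.span R {x p.1.1 p.1.2.val})
      (fun q : {q : Σ δ : Δ, Fin (l δ) // m ≤ (q.2 : ℕ)} => Submodule.span R {y q.1.1 q.1.2.val})
      (hx.indep.comp Subtype.val_injective) (fun p => hatomx p.1)
      (hy.indep.comp Subtype.val_injective) (fun q => hatomy q.1) ?_
    rw [← JordanAux2.map_pow_top φ hx.step hx.spans hx.zero_after m,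
      ← JordanAux2.map_pow_top φ hy.step hy.spans hy.zero_after m]
  -- split the invariant
  have hsplitx : ∀ m : ℕ, Nat.card {p : Σ γ : Γ, Fin (k γ) // m ≤ (p.2 : ℕ)}
      = Nat.card {p : Σ γ : Γ, Fin (k γ) // m + 1 ≤ (p.2 : ℕ)}
        + Nat.card {γ : Γ // m + 1 ≤ k γ} := by
    intro m
    rw [JordanAux3.card_le_split (fun p : Σ γ : Γ, Fin (k γ) => (p.2 : ℕ)) m]
    exact congrArg _ (Nat.card_congr (JordanAux3.fiberEquiv k m))
  have hsplity : ∀ m : ℕ, Nat.card {q : Σ δ : Δ, Fin (l δ) // m ≤ (q.2 : ℕ)}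
      = Nat.card {q : Σ δ : Δ, Fin (l δ) // m + 1 ≤ (q.2 : ℕ)}
        + Nat.card {δ : Δ // m + 1 ≤ l δ} := by
    intro m
    rw [JordanAux3.card_le_split (fun q : Σ δ : Δ, Fin (l δ) => (q.2 : ℕ)) m]
    exact congrArg _ (Nat.card_congr (JordanAux3.fiberEquiv l m))
  have hg : ∀ m : ℕ, Nat.card {γ : Γ // m + 1 ≤ k γ} = Nat.card {δ : Δ // m + 1 ≤ l δ} := by
    intro m
    have h1 := (hsplitx m).symm.trans ((hc m).trans (hsplity m))
    rw [hc (m + 1)] at h1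
    omega
  have hf : ∀ m : ℕ, Nat.card {γ : Γ // k γ = m} = Nat.card {δ : Δ // l δ = m} := by
    intro m
    match m with
    | 0 =>
      have h1 : IsEmpty {γ : Γ // k γ = 0} := ⟨fun a => by have := hx.k_pos a.1; omega⟩
      have h2 : IsEmpty {δ : Δ // l δ = 0} := ⟨fun a => by have := hy.k_pos a.1; omega⟩
      rw [Nat.card_of_isEmpty, Nat.card_of_isEmpty]
    | m + 1 =>
      have h1 := (JordanAux3.card_le_split k (m + 1)).symm.trans
        ((hg m).trans (JordanAux3.card_le_split l (m + 1)))
      rw [hg (m + 1)] at h1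
      omega
  have e : ∀ m : ℕ, {γ : Γ // k γ = m} ≃ {δ : Δ // l δ = m} :=
    fun m => (Finite.card_eq.mp (hf m)).some
  exact ⟨Equiv.ofFiberEquiv e, fun γ => (Equiv.ofFiberEquiv_map e γ).symm⟩
end

section
/- Let φ be a nonzero nilpotent R-endomorphism of a semisimple left R-module M. Then there exists a nilpotent Jordan normal base of M with respect to φ consisting of a single block if and only if M is finitely generated of composition length d and φ^{d-1} ≠ 0. -/
open Polynomial

section Aux

variable {R : Type*} [Ring R] {M : Type*} [AddCommGroup M] [Module R M]

lemma aux_covBy_sup {A S : Submodule R M} (hS : IsSimpleModule R S) (h : Disjoint A S) :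
    A ⋖ A ⊔ S := by
  rw [sup_comm, covBy_iff_quot_is_simple le_sup_right]
  have e := LinearMap.quotientInfEquivSupQuotient S A
  have hb0 : Submodule.comap S.subtype S ⊓ Submodule.comap S.subtype A =
      Submodule.comap S.subtype (⊥ : Submodule R M) := by
    rw [← Submodule.comap_inf, (disjoint_comm.mp h).eq_bot]
  rw [hb0] at e
  haveI : IsSimpleModule R (↥S ⧸ Submodule.comap S.subtype (⊥ : Submodule R M)) := by
    haveI := hS
    have hb : Submodule.comap S.subtype (⊥ : Submodule R M) = ⊥ := by simp
    exact IsSimpleModule.congr (Submodule.quotEquivOfEqBot _ hb)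
  exact IsSimpleModule.congr e.symm

/-- partial sups of a finite family of submodules -/
def NN {t : ℕ} (p : Fin t → Submodule R M) (j : ℕ) : Submodule R M :=
  ⨆ i : Fin t, ⨆ _ : (i : ℕ) < j, p i

lemma NN_zero {t : ℕ} (p : Fin t → Submodule R M) : NN p 0 = ⊥ := by
  simp [NN]

lemma NN_last {t : ℕ} (p : Fin t → Submodule R M) : NN p t = ⨆ i, p i := by
  refine le_antisymm (iSup_le fun i => iSup_le fun _ => le_iSup _ i) (iSup_le fun i => ?_)
  exact le_iSup_of_le i (le_iSup_of_le i.isLt le_rfl)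

lemma NN_succ {t : ℕ} (p : Fin t → Submodule R M) {j : ℕ} (hj : j < t) :
    NN p (j + 1) = NN p j ⊔ p ⟨j, hj⟩ := by
  refine le_antisymm (iSup_le fun i => iSup_le fun hi => ?_) (sup_le ?_ ?_)
  · rcases Nat.lt_succ_iff_lt_or_eq.mp hi with h | h
    · exact le_sup_of_le_left (le_iSup_of_le i (le_iSup_of_le h le_rfl))
    · have : i = ⟨j, hj⟩ := Fin.ext h
      rw [this]; exact le_sup_right
  · exact iSup_mono fun i => iSup_le fun h => le_iSup_of_le (Nat.lt_succ_of_lt h) le_rfl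
  · exact le_iSup_of_le ⟨j, hj⟩ (le_iSup_of_le (Nat.lt_succ_self j) le_rfl)

lemma NN_covBy {t : ℕ} {p : Fin t → Submodule R M} (hp : ∀ i, IsSimpleModule R (p i))
    (hind : iSupIndep p) {j : ℕ} (hj : j < t) : NN p j ⋖ NN p (j + 1) := by
  rw [NN_succ p hj]
  refine aux_covBy_sup (hp _) ?_
  refine ((hind ⟨j, hj⟩).mono_right ?_).symm
  refine iSup_le fun i => iSup_le fun hi => le_iSup_of_le i (le_iSup_of_le ?_ le_rfl)
  intro he
  subst he
  simp at hi

/-- The composition series built from an independent family of simple submodules. -/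
def chainSeries {t : ℕ} (p : Fin t → Submodule R M) (hp : ∀ i, IsSimpleModule R (p i))
    (hind : iSupIndep p) : CompositionSeries (Submodule R M) where
  length := t
  toFun i := NN p i
  step i := by
    show NN p (i.castSucc : ℕ) ⋖ NN p (i.succ : ℕ)
    have h1 : ((i.succ : Fin (t+1)) : ℕ) = ((i.castSucc : Fin (t+1)) : ℕ) + 1 := rfl
    rw [h1]
    exact NN_covBy hp hind i.isLt

lemma chainSeries_head {t : ℕ} (p : Fin t → Submodule R M) (hp : ∀ i, IsSimpleModule R (p i))
    (hind : iSupIndep p) : (chainSeries p hp hind).head = ⊥ :=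
  NN_zero p

lemma chainSeries_last {t : ℕ} (p : Fin t → Submodule R M) (hp : ∀ i, IsSimpleModule R (p i))
    (hind : iSupIndep p) : (chainSeries p hp hind).last = ⨆ i, p i :=
  NN_last p

lemma exists_series_to_top [IsSemisimpleModule R M] [IsArtinian R M] [IsNoetherian R M]
    (T : Submodule R M) :
    ∃ u : CompositionSeries (Submodule R M), u.head = T ∧ u.last = ⊤ := by
  haveI : IsAtomic (Submodule R M) := isAtomic_of_orderBot_wellFounded_lt wellFounded_lt
  have hwf : WellFounded ((· > ·) : Submodule R M → Submodule R M → Prop) := wellFounded_gt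
  refine hwf.induction (C := fun T => ∃ u : CompositionSeries (Submodule R M), u.head = T ∧ u.last = ⊤) T ?_
  intro T ih
  by_cases hT : T = ⊤
  · subst hT
    exact ⟨RelSeries.singleton _ ⊤, rfl, rfl⟩
  · obtain ⟨C, hC⟩ := exists_isCompl T
    have hCne : C ≠ ⊥ := by
      rintro rfl
      exact hT (by simpa using hC.codisjoint.eq_top)
    obtain ⟨a, ha, haC⟩ := (IsAtomic.eq_bot_or_exists_atom_le C).resolve_left hCne
    have hdis : Disjoint T a := hC.disjoint.mono_right haC
    have hcov : T ⋖ T ⊔ a := aux_covBy_sup (isSimpleModule_iff_isAtom.mpr ha) hdis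
    obtain ⟨u, hu1, hu2⟩ := ih (T ⊔ a) hcov.lt
    refine ⟨u.cons T (by rw [hu1]; exact hcov), RelSeries.head_cons _ _ _, ?_⟩
    rw [RelSeries.last_cons]
    exact hu2

end Aux

/-- For a nonzero nilpotent endomorphism `φ` of a semisimple module `M`: there is a nilpotent
Jordan normal base of `M` with respect to `φ` consisting of a single block iff `M` is finitely
generated of composition length `d` and `φ^(d-1) ≠ 0`. -/
theorem stmt_4 {R : Type*} [Ring R] {M : Type*} [AddCommGroup M] [Module R M]
    [IsSemisimpleModule R M] (φ : Module.End R M) (hφ0 : φ ≠ 0) (hφ : IsNilpotent φ) :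
    (∃ (n : ℕ) (x : ℕ → M), IsNilpotentJordanBase φ (fun _ : Unit => n) (fun _ => x)) ↔
      (Module.Finite R M ∧ ∃ s : CompositionSeries (Submodule R M),
        s.head = ⊥ ∧ s.last = ⊤ ∧ φ ^ (s.length - 1) ≠ 0) := by
  constructor
  · rintro ⟨n, x, hb⟩
    have hn1 : 1 ≤ n := hb.k_pos ()
    set p : Fin n → Submodule R M := fun i => Submodule.span R {x (i : ℕ)} with hpdef
    have hps : ∀ i, IsSimpleModule R (p i) := fun i => hb.simple () i i.isLt
    have hind : iSupIndep p := by
      exact hb.indep.comp (f := fun i : Fin n => (⟨(), i⟩ : Σ _ : Unit, Fin n))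
        (fun a b h => eq_of_heq (Sigma.mk.inj_iff.mp h).2)
    have hsup : ⨆ i, p i = ⊤ := by
      have := hb.spans
      rwa [iSup_sigma, iSup_unique] at this
    constructor
    · rw [Module.finite_def, ← hsup]
      exact Submodule.fg_iSup _ fun i => Submodule.fg_span_singleton _
    · refine ⟨chainSeries p hps hind, chainSeries_head p hps hind,
        by rw [chainSeries_last]; exact hsup, ?_⟩
      show φ ^ (n - 1) ≠ 0
      have hx : ∀ j : ℕ, (φ ^ j) (x 0) = x j := by
        intro j
        induction j with
        | zero => simp
        | succ j ih => rw [pow_succ', Module.End.mul_apply, ih]; exact hb.step () j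
      have hxne : x (n - 1) ≠ 0 := by
        intro h0
        have hsimp := hb.simple () (n - 1) (by omega)
        rw [h0, Submodule.span_zero_singleton] at hsimp
        exact (isSimpleModule_iff_isAtom.mp hsimp).1 rfl
      intro hzero
      apply hxne
      rw [← hx (n - 1), hzero]
      rfl
  · rintro ⟨hfin, s, hs1, hs2, hs3⟩
    haveI := hfin
    haveI : IsNoetherian R M := (IsSemisimpleModule.finite_tfae.out 0 1).mp hfin
    classical
    obtain ⟨k0, hk0⟩ := hφ
    have hex : ∃ k, φ ^ k = 0 := ⟨k0, hk0⟩
    obtain ⟨t, hft, hmin⟩ : ∃ t, φ ^ t = 0 ∧ ∀ k < t, φ ^ k ≠ 0 :=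
      ⟨Nat.find hex, Nat.find_spec hex, fun k hk => Nat.find_min hex hk⟩
    set d := s.length with hddef
    have hdt : d - 1 < t := by
      by_contra h
      push_neg at h
      apply hs3
      rw [show d - 1 = t + (d - 1 - t) from by omega, pow_add, hft, zero_mul]
    have htpos : 0 < t := by
      rcases Nat.eq_zero_or_pos t with h | h
      · exfalso
        apply hφ0
        have h1 := hft
        rw [h, pow_zero] at h1
        rw [← one_mul φ, h1, zero_mul]
      · exact h
    have htd : d ≤ t := by omega
    have hklt : φ ^ (t - 1) ≠ 0 := hmin _ (by omega)
    have hker : LinearMap.ker (φ ^ (t - 1)) ≠ ⊤ := fun h => hklt (LinearMap.ker_eq_top.mp h)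
    obtain ⟨C, hC⟩ := exists_isCompl (LinearMap.ker (φ ^ (t - 1)))
    haveI : IsAtomic (Submodule R M) := isAtomic_of_orderBot_wellFounded_lt wellFounded_lt
    have hCne : C ≠ ⊥ := by
      rintro rfl
      exact hker (by simpa using hC.codisjoint.eq_top)
    obtain ⟨S, hS, hSC⟩ := (IsAtomic.eq_bot_or_exists_atom_le C).resolve_left hCne
    have hdis : Disjoint (LinearMap.ker (φ ^ (t - 1))) S := hC.disjoint.mono_right hSC
    have hSsimple : IsSimpleModule R S := isSimpleModule_iff_isAtom.mpr hS
    obtain ⟨m, hmS, hm0⟩ := (Submodule.ne_bot_iff S).mp hS.1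
    have hinj : ∀ c ∈ S, (φ ^ (t - 1)) c = 0 → c = 0 := fun c hc h0 =>
      Submodule.disjoint_def.mp hdis c (LinearMap.mem_ker.mpr h0) hc
    set y : ℕ → M := fun i => (φ ^ i) m with hydef
    have hpow0 : ∀ k, t ≤ k → (φ ^ k : Module.End R M) = 0 := by
      intro k hk
      rw [show k = (k - t) + t from by omega, pow_add, hft, mul_zero]
    have hyzero : ∀ i, t ≤ i → y i = 0 := by
      intro i hi
      show (φ ^ i) m = 0
      rw [hpow0 i hi]
      rfl
    have hyshift : ∀ a i, (φ ^ a) (y i) = y (a + i) := by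
      intro a i
      show (φ ^ a) ((φ ^ i) m) = (φ ^ (a + i)) m
      rw [pow_add, Module.End.mul_apply]
    have hspan_simple : ∀ i < t, IsSimpleModule R (Submodule.span R {y i}) := by
      intro i hi
      have hsm : Submodule.span R {m} = S := by
        have h1 : Submodule.span R {m} ≤ S := Submodule.span_le.mpr (by simpa using hmS)
        refine (hS.le_iff.mp h1).resolve_left ?_
        rw [Submodule.span_singleton_eq_bot]
        exact hm0
      have hmap : Submodule.span R {y i} = Submodule.map (φ ^ i) S := by
        rw [← hsm, Submodule.map_span, Set.image_singleton]
      rw [hmap]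
      set g : S →ₗ[R] M := (φ ^ i).domRestrict S with hgdef
      have hginj : Function.Injective g := by
        intro a b hab
        have h1 : (φ ^ i) ((a : M) - b) = 0 := by
          rw [map_sub, sub_eq_zero]
          exact hab
        have h2 : (φ ^ (t - 1)) ((a : M) - b) = 0 := by
          rw [show t - 1 = (t - 1 - i) + i from by omega, pow_add, Module.End.mul_apply, h1,
            map_zero]
        have h3 : ((a : M) - b) = 0 := hinj _ (Submodule.sub_mem S a.2 b.2) h2
        exact Subtype.ext (by rwa [sub_eq_zero] at h3)
      haveI := hSsimple
      have hrg : IsSimpleModule R (LinearMap.range g) :=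
        IsSimpleModule.congr (LinearEquiv.ofInjective g hginj).symm
      rwa [LinearMap.range_domRestrict] at hrg
    have hcore : ∀ c : Fin t → M, (∀ i : Fin t, c i ∈ Submodule.span R {y (i : ℕ)}) →
        (∑ i, c i) = 0 → ∀ j, c j = 0 := by
      intro c hc hsum
      suffices H : ∀ n : ℕ, ∀ j : Fin t, (j : ℕ) = n → c j = 0 by
        intro j; exact H j j rfl
      intro n
      induction n using Nat.strong_induction_on with
      | _ n ih =>
        intro j hj
        have hnt : n < t := hj ▸ j.isLt
        obtain ⟨r, hr⟩ := Submodule.mem_span_singleton.mp (hc j)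
        have h1 : ∑ i, (φ ^ (t - 1 - n)) (c i) = 0 := by
          rw [← map_sum, hsum, map_zero]
        have h2 : ∑ i, (φ ^ (t - 1 - n)) (c i) = (φ ^ (t - 1 - n)) (c j) := by
          refine Finset.sum_eq_single j ?_ (by simp)
          intro i _ hij
          have hij' : (i : ℕ) ≠ n := fun h => hij (Fin.ext (by omega))
          rcases Nat.lt_or_ge (i : ℕ) n with hlt | hge
          · rw [ih _ hlt i rfl, map_zero]
          · have hgt : n < (i : ℕ) := lt_of_le_of_ne hge (Ne.symm hij')
            obtain ⟨ri, hri⟩ := Submodule.mem_span_singleton.mp (hc i)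
            rw [← hri, map_smul, hyshift, hyzero _ (by omega), smul_zero]
        have h3 : (φ ^ (t - 1 - n)) (c j) = 0 := by rw [← h2, h1]
        rw [← hr] at h3 ⊢
        have hyj : y (j : ℕ) = y n := by rw [hj]
        rw [hyj] at h3 ⊢
        rw [map_smul, hyshift, show t - 1 - n + n = t - 1 from by omega] at h3
        have hrm : r • m = 0 := by
          refine hinj _ (S.smul_mem r hmS) ?_
          rw [map_smul]
          exact h3
        show r • (φ ^ n) m = 0
        rw [← map_smul, hrm, map_zero]
    have hindep : iSupIndep (fun i : Fin t => Submodule.span R {y (i : ℕ)}) := by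
      intro j
      rw [Submodule.disjoint_def]
      intro a haj hsup
      rw [Submodule.mem_iSup_iff_exists_finsupp] at hsup
      obtain ⟨f, hf, hfsum⟩ := hsup
      have hfj : f j = 0 := by
        have h := hf j
        rw [iSup_neg (fun h' => h' rfl)] at h
        simpa using h
      set c : Fin t → M := Function.update f j (-a) with hcdef
      have hcm : ∀ i : Fin t, c i ∈ Submodule.span R {y (i : ℕ)} := by
        intro i
        by_cases hij : i = j
        · rw [hcdef, hij, Function.update_self]
          exact neg_mem haj
        · rw [hcdef, Function.update_of_ne hij]
          have h := hf i
          rwa [iSup_pos hij] at h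
      have hcs : ∑ i, c i = 0 := by
        rw [hcdef, Finset.sum_update_of_mem (Finset.mem_univ j), Finset.sdiff_singleton_eq_erase, Finset.sum_erase _ hfj]
        have h : ∑ i, f i = a := by
          rw [← hfsum]
          exact (Finsupp.sum_fintype f (fun _ xi => xi) (fun _ => rfl)).symm
        rw [h]
        exact neg_add_cancel a
      have h := hcore c hcm hcs j
      rw [hcdef, Function.update_self] at h
      simpa using h
    set q : Fin t → Submodule R M := fun i => Submodule.span R {y (i : ℕ)} with hqdef
    have hqs : ∀ i, IsSimpleModule R (q i) := fun i => hspan_simple i i.isLt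
    have hT_top : (⨆ i, q i) = ⊤ := by
      obtain ⟨u, hu1, hu2⟩ := exists_series_to_top (R := R) (M := M) (⨆ i, q i)
      have hconn : (chainSeries q hqs hindep).last = u.head := by
        rw [chainSeries_last, hu1]
      set v := (chainSeries q hqs hindep).smash u hconn with hvdef
      have hvh : v.head = ⊥ := by
        rw [hvdef, RelSeries.head_smash]
        exact chainSeries_head q hqs hindep
      have hvl : v.last = ⊤ := by
        rw [hvdef, RelSeries.last_smash]
        exact hu2
      have hlen : v.length = s.length :=
        (CompositionSeries.jordan_holder v s (by rw [hvh, hs1]) (by rw [hvl, hs2])).length_eq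
      have hlen2 : t + u.length = d := hlen
      have hu0 : u.length = 0 := by omega
      have hhl : u.head = u.last := by
        show u 0 = u (Fin.last u.length)
        congr 1
        simp [Fin.ext_iff, hu0]
      rw [hu1, hu2] at hhl
      exact hhl
    refine ⟨t, y, ?_⟩
    constructor
    · exact fun _ => htpos
    · exact fun _ i hi => hspan_simple i hi
    · intro pj
      refine (hindep pj.2).mono_right ?_
      refine iSup_le fun q => iSup_le fun hq => ?_
      refine le_iSup_of_le q.2 (le_iSup_of_le ?_ le_rfl)
      intro he
      exact hq (Sigma.ext (Subsingleton.elim _ _) (heq_of_eq he))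
    · rw [iSup_sigma, iSup_unique]
      exact hT_top
    · intro _ i
      show φ ((φ ^ i) m) = (φ ^ (i + 1)) m
      rw [pow_succ', Module.End.mul_apply]
    · exact fun _ i hi => hyzero i hi
    · exact ⟨t, fun _ => le_rfl⟩
end

section
/- Let φ be a nonzero nilpotent R-endomorphism of a semisimple left R-module M. Then M admits a nilpotent Jordan normal base with respect to φ consisting of one block if and only if φ is an indecomposable nilpotent element of the endomorphism ring Hom_R(M,M), i.e., there is no idempotent e ∈ Hom_R(M,M) with 0 ≠ e ≠ 1 and e∘φ = φ∘e. -/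
open Polynomial

set_option linter.unusedSectionVars false
set_option maxHeartbeats 1000000

section aux
variable {R : Type*} [Ring R] {M : Type*} [AddCommGroup M] [Module R M]
variable {ι : Type*} [Fintype ι] [DecidableEq ι]

lemma aux_mem_iSup {p : ι → Submodule R M} {y : M} (hy : y ∈ ⨆ i, p i) :
    ∃ μ : ι → M, (∀ i, μ i ∈ p i) ∧ ∑ i, μ i = y := by
  rw [Submodule.mem_iSup_iff_exists_finsupp] at hy
  obtain ⟨f, hf, hsum⟩ := hy
  exact ⟨fun i => f i, hf, by rwa [Finsupp.sum_fintype _ _ (fun _ => rfl)] at hsum⟩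

lemma aux_indep_of {p : ι → Submodule R M}
    (h : ∀ μ : ι → M, (∀ i, μ i ∈ p i) → ∑ i, μ i = 0 → ∀ i, μ i = 0) :
    iSupIndep p := by
  classical
  rw [iSupIndep_iff_dfinsupp_lsum_injective]
  rw [injective_iff_map_eq_zero]
  intro f hf
  have hsum : ∑ i, ((DFinsupp.equivFunOnFintype f i : M)) = 0 := by
    rw [DFinsupp.lsum_apply_apply, DFinsupp.sumAddHom_apply] at hf
    rw [← hf]
    exact (DFinsupp.sum_eq_sum_fintype f (fun i => rfl)).symm
  have := h (fun i => (DFinsupp.equivFunOnFintype f i : M))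
    (fun i => (DFinsupp.equivFunOnFintype f i).2) hsum
  ext i
  exact Subtype.ext_iff.mp (by simpa using this i)

lemma aux_indep_apply {p : ι → Submodule R M} (hp : iSupIndep p)
    {μ : ι → M} (hμ : ∀ i, μ i ∈ p i) (hsum : ∑ i, μ i = 0) : ∀ i, μ i = 0 := by
  classical
  rw [iSupIndep_iff_dfinsupp_lsum_injective] at hp
  set f : Π₀ i, p i := DFinsupp.equivFunOnFintype.symm (fun i => ⟨μ i, hμ i⟩) with hfdef
  have hlsum : DFinsupp.lsum ℕ (M := fun i => ↥(p i)) (fun i => (p i).subtype) f = 0 := by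
    rw [DFinsupp.lsum_apply_apply, DFinsupp.sumAddHom_apply]
    rw [DFinsupp.sum_eq_sum_fintype f (fun i => rfl)]
    simpa [hfdef, DFinsupp.equivFunOnFintype] using hsum
  have : f = 0 := hp (by simpa using hlsum)
  intro i
  have h2 := congrArg (fun g => (DFinsupp.equivFunOnFintype g i : M)) this
  simpa [hfdef, DFinsupp.equivFunOnFintype] using h2

lemma aux_sum_sigma {n : ℕ} {β : Type*} [AddCommMonoid β] (g : ℕ → β) :
    ∑ p : Σ _ : Unit, Fin n, g p.2.val = ∑ i ∈ Finset.range n, g i := by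
  rw [← Finset.univ_sigma_univ, Finset.sum_sigma]
  simp [Finset.sum_range]

lemma aux_sum_split {β : Type*} [AddCommMonoid β] {n : ℕ} (hn : 1 ≤ n) (f : ℕ → β) :
    ∑ i ∈ Finset.range n, f i = (∑ i ∈ Finset.range (n-1), f i) + f (n-1) := by
  conv_lhs => rw [(by omega : n = (n-1)+1)]
  rw [Finset.sum_range_succ]

lemma aux_sum_shift {β : Type*} [AddCommMonoid β] {n : ℕ} (hn : 1 ≤ n) (f : ℕ → β) :
    ∑ i ∈ Finset.range n, f i = (∑ i ∈ Finset.range (n-1), f (i+1)) + f 0 := by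
  conv_lhs => rw [(by omega : n = (n-1)+1)]
  rw [Finset.sum_range_succ']

/-- Forward direction. -/
lemma fwd (φ : Module.End R M) (hφ : IsNilpotent φ) {n : ℕ} {x : ℕ → M}
    (hb : IsNilpotentJordanBase φ (fun _ : Unit => n) (fun _ => x)) :
    ¬∃ e : Module.End R M, IsIdempotentElem e ∧ e ≠ 0 ∧ e ≠ 1 ∧ e * φ = φ * e := by
  classical
  rintro ⟨e, he, he0, he1, hcomm⟩
  have hn : 1 ≤ n := hb.k_pos ()
  set S : ℕ → Submodule R M := fun i => Submodule.span R {x i} with hS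
  have atom : ∀ i < n, IsAtom (S i) := fun i hi =>
    isSimpleModule_iff_isAtom.mp (hb.simple () i hi)
  have xne : ∀ i < n, x i ≠ 0 := by
    intro i hi h0
    have : S i = ⊥ := by simp [hS, h0]
    exact (atom i hi).1 this
  -- ker φ = S (n-1)
  have hlast : φ (x (n-1)) = 0 := by
    have := hb.step () (n-1)
    rw [this]
    exact hb.zero_after () _ (by omega)
  have hSker : S (n-1) ≤ LinearMap.ker φ := by
    rw [hS, Submodule.span_le, Set.singleton_subset_iff]
    exact hlast
  have hkerS : LinearMap.ker φ ≤ S (n-1) := by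
    intro y hy
    have hy' : y ∈ ⨆ p : Σ _ : Unit, Fin n, Submodule.span R {x p.2.val} := by
      rw [hb.spans]; trivial
    obtain ⟨μ, hμ, hμsum⟩ := aux_mem_iSup hy'
    set c : ℕ → M := fun i => if h : i < n then μ ⟨(), ⟨i, h⟩⟩ else 0 with hc
    have hcmem : ∀ i, c i ∈ S i := by
      intro i
      by_cases h : i < n
      · simpa [hc, h] using hμ ⟨(), ⟨i, h⟩⟩
      · simp [hc, h]
    have hcr : ∀ i, ∃ r : R, c i = r • x i := by
      intro i
      obtain ⟨r, hr⟩ := (Submodule.mem_span_singleton).mp (hcmem i)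
      exact ⟨r, hr.symm⟩
    have hcsum : ∑ i ∈ Finset.range n, c i = y := by
      rw [← hμsum, ← aux_sum_sigma (n := n) c]
      apply Finset.sum_congr rfl
      intro p _
      simp [hc, p.2.isLt]
    -- the shifted family
    set d : ℕ → M := fun j => if j = 0 then 0 else φ (c (j-1)) with hd
    have hdmem : ∀ j, d j ∈ S j := by
      intro j
      rcases Nat.eq_zero_or_pos j with h0 | h0
      · simp [hd, h0]
      · obtain ⟨r, hr⟩ := hcr (j-1)
        have : d j = r • x j := by
          have hj : j - 1 + 1 = j := by omega
          simp only [hd, if_neg (by omega : ¬ j = 0), hr, map_smul]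
          rw [hb.step () (j-1), hj]
        rw [this]
        exact Submodule.smul_mem _ _ (Submodule.mem_span_singleton_self _)
    have hdsum : ∑ j ∈ Finset.range n, d j = 0 := by
      have h1 : ∑ j ∈ Finset.range n, d j = ∑ i ∈ Finset.range (n-1), φ (c i) := by
        rw [aux_sum_shift hn d]
        simp [hd]
      have h2 : ∑ i ∈ Finset.range n, φ (c i) = ∑ i ∈ Finset.range (n-1), φ (c i) := by
        rw [aux_sum_split hn (fun i => φ (c i))]
        have : φ (c (n-1)) = 0 := by
          obtain ⟨r, hr⟩ := hcr (n-1)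
          rw [hr, map_smul, hlast, smul_zero]
        rw [this, add_zero]
      rw [h1, ← h2, ← map_sum, hcsum]
      exact hy
    have hdzero : ∀ j < n, d j = 0 := by
      intro j hj
      have := aux_indep_apply hb.indep
        (μ := fun p : Σ _ : Unit, Fin n => d p.2.val)
        (fun p => hdmem p.2.val) ?_ ⟨(), ⟨j, hj⟩⟩
      · exact this
      · rw [aux_sum_sigma (n := n) d]
        exact hdsum
    -- hence φ (c i) = 0 for i < n-1, so c i = 0 for i < n-1
    have hczero : ∀ i, i < n - 1 → c i = 0 := by
      intro i hi
      have hφc : φ (c i) = 0 := by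
        have := hdzero (i+1) (by omega)
        simpa [hd] using this
      -- injectivity of φ on S i
      have hxne : x (i+1) ≠ 0 := xne (i+1) (by omega)
      have hker : LinearMap.ker φ ⊓ S i = ⊥ := by
        have hne : LinearMap.ker φ ⊓ S i ≠ S i := by
          intro hEq
          have : x i ∈ LinearMap.ker φ ⊓ S i := hEq.symm ▸ Submodule.mem_span_singleton_self _
          have : φ (x i) = 0 := this.1
          rw [hb.step () i] at this
          exact hxne this
        exact (atom i (by omega)).2 _ (lt_of_le_of_ne inf_le_right hne)
      have : c i ∈ LinearMap.ker φ ⊓ S i := ⟨hφc, hcmem i⟩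
      rw [hker] at this
      simpa using this
    -- y = c (n-1)
    have : y = c (n-1) := by
      rw [← hcsum, aux_sum_split hn c]
      rw [Finset.sum_eq_zero (fun i hi => hczero i (Finset.mem_range.mp hi))]
      rw [zero_add]
    rw [this]
    exact hcmem (n-1)
  have hkerEq : LinearMap.ker φ = S (n-1) := le_antisymm hkerS hSker
  have hkerAtom : IsAtom (LinearMap.ker φ) := hkerEq ▸ atom (n-1) (by omega)
  -- e commutes with powers of φ
  have hcommpow : ∀ (k : ℕ) (z : M), e ((φ^k) z) = (φ^k) (e z) := by
    intro k z
    have h : e * φ^k = φ^k * e := (Commute.pow_right hcomm k)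
    simpa [Module.End.mul_apply] using LinearMap.congr_fun h z
  obtain ⟨N, hN⟩ := hφ
  -- produce u ∈ ker φ ∩ ker e, nonzero
  have hfind : ∀ z : M, z ≠ 0 → ∃ u : M, u ≠ 0 ∧ φ u = 0 ∧ ∃ j, u = (φ^j) z := by
    intro z hz
    have hex : ∃ j, (φ^j) z = 0 := ⟨N, by rw [hN]; rfl⟩
    set j0 := Nat.find hex with hj0
    have hj0pos : 0 < j0 := by
      rcases Nat.eq_zero_or_pos j0 with h | h
      · exfalso; have := Nat.find_spec hex; rw [← hj0, h] at this; simp at this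
        exact hz this
      · exact h
    have hne : (φ^(j0-1)) z ≠ 0 := Nat.find_min hex (by omega)
    refine ⟨(φ^(j0-1)) z, hne, ?_, ⟨j0-1, rfl⟩⟩
    have : (φ^j0) z = 0 := Nat.find_spec hex
    calc φ ((φ^(j0-1)) z) = (φ^(j0-1+1)) z := by rw [pow_succ']; rfl
    _ = 0 := by rw [(by omega : j0 - 1 + 1 = j0)]; exact this
  -- u : nonzero elt of ker φ killed by e
  obtain ⟨w, hw⟩ : ∃ w, e w ≠ w := by
    by_contra h
    push_neg at h
    exact he1 (LinearMap.ext fun z => by simp [h z])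
  have hw0 : w - e w ≠ 0 := fun h => hw (by rw [← sub_eq_zero]; rw [← neg_sub]; simp [h])
  obtain ⟨u, hu0, huk, j, hju⟩ := hfind _ hw0
  have hee : ∀ z, e (e z) = e z := fun z => by
    simpa [Module.End.mul_apply] using LinearMap.congr_fun he z
  have heu : e u = 0 := by
    rw [hju, hcommpow]
    have h3 : e (w - e w) = 0 := by rw [map_sub, hee, sub_self]
    rw [h3, map_zero]
  -- v : nonzero elt of ker φ fixed by e
  obtain ⟨w', hw'⟩ : ∃ w', e w' ≠ 0 := by
    by_contra h
    push_neg at h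
    exact he0 (LinearMap.ext fun z => h z)
  obtain ⟨v, hv0, hvk, j', hjv⟩ := hfind _ hw'
  have hev : e v = v := by
    rw [hjv, hcommpow, hee]
  -- ker φ is an atom containing both u and v
  have hspanu : Submodule.span R {u} = LinearMap.ker φ := by
    have hle : Submodule.span R {u} ≤ LinearMap.ker φ := by
      rw [Submodule.span_le, Set.singleton_subset_iff]; exact huk
    rcases eq_or_lt_of_le hle with h | h
    · exact h
    · exfalso
      have := hkerAtom.2 _ h
      have : u ∈ (⊥ : Submodule R M) := this ▸ Submodule.mem_span_singleton_self u
      exact hu0 (by simpa using this)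
  have hvmem : v ∈ Submodule.span R {u} := by
    rw [hspanu]; exact hvk
  obtain ⟨r, hr⟩ := Submodule.mem_span_singleton.mp hvmem
  have : v = 0 := by
    rw [← hev, ← hr, map_smul, heu, smul_zero]
  exact hv0 this

end aux

section aux2
variable {R : Type*} [Ring R] {M : Type*} [AddCommGroup M] [Module R M]

lemma aux_span_eq {s : M} (ha : IsAtom (Submodule.span R {s})) {t : M}
    (ht : t ∈ Submodule.span R {s}) (ht0 : t ≠ 0) :
    Submodule.span R {t} = Submodule.span R {s} := by
  have hle : Submodule.span R {t} ≤ Submodule.span R {s} := by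
    rw [Submodule.span_le, Set.singleton_subset_iff]; exact ht
  rcases eq_or_lt_of_le hle with h | h
  · exact h
  · exfalso
    have hb := ha.2 _ h
    exact ht0 (by simpa using (Submodule.span_singleton_eq_bot).mp hb)

lemma aux_atom_map (ψ : Module.End R M) {s : M} (ha : IsAtom (Submodule.span R {s}))
    (hs : ψ s ≠ 0) : IsAtom (Submodule.span R {ψ s}) := by
  constructor
  · rw [Ne, Submodule.span_singleton_eq_bot]; exact hs
  · intro b hb
    by_contra hb0
    obtain ⟨t, htb, ht0⟩ := Submodule.exists_mem_ne_zero_of_ne_bot hb0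
    obtain ⟨r, hr⟩ := Submodule.mem_span_singleton.mp (hb.le htb)
    have hrs : r • s ≠ 0 := by
      intro h
      apply ht0
      rw [← hr, ← map_smul, h, map_zero]
    have hsp : Submodule.span R {r • s} = Submodule.span R {s} :=
      aux_span_eq ha (Submodule.smul_mem _ _ (Submodule.mem_span_singleton_self s)) hrs
    have hsmem : s ∈ Submodule.span R {r • s} := by
      rw [hsp]; exact Submodule.mem_span_singleton_self s
    obtain ⟨r', hr'⟩ := Submodule.mem_span_singleton.mp hsmem
    have : ψ s = r' • t := by
      rw [← hr, ← map_smul, ← map_smul]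
      congr 1
      rw [smul_smul] at hr' ⊢
      exact hr'.symm
    have hle : Submodule.span R {ψ s} ≤ b := by
      rw [Submodule.span_le, Set.singleton_subset_iff, this]
      exact Submodule.smul_mem _ _ htb
    exact absurd (lt_of_lt_of_le hb hle) (lt_irrefl b)

end aux2

section bwd
variable {R : Type*} [Ring R] {M : Type*} [AddCommGroup M] [Module R M]

lemma bwd_core [IsSemisimpleModule R M] (φ : Module.End R M) (hφ0 : φ ≠ 0)
    (hφ : IsNilpotent φ)
    (hind : ¬∃ e : Module.End R M, IsIdempotentElem e ∧ e ≠ 0 ∧ e ≠ 1 ∧ e * φ = φ * e) :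
    ∃ (m : ℕ) (s : M), 1 ≤ m ∧ (∀ i < m, IsAtom (Submodule.span R {(φ^i) s})) ∧
      (∀ i, m ≤ i → (φ^i) s = 0) ∧
      (∀ (c : ℕ → M), (∀ i, ∃ r : R, c i = r • (φ^i) s) →
        (∑ i ∈ Finset.range m, c i = 0) → ∀ i < m, c i = 0) ∧
      (⨆ p : Σ _ : Unit, Fin m, Submodule.span R {(φ^(p.2 : ℕ)) s}) = ⊤ := by
  classical
  obtain ⟨N, hN⟩ := hφ
  have hexp : ∃ k, φ ^ k = 0 := ⟨N, hN⟩
  set m := Nat.find hexp with hm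
  have hm0 : φ ^ m = 0 := Nat.find_spec hexp
  have hmmin : ∀ k < m, φ ^ k ≠ 0 := fun k hk => Nat.find_min hexp hk
  have hm1 : 1 ≤ m := by
    rcases Nat.eq_zero_or_pos m with h | h
    · exfalso
      have h0 : φ ^ m = 0 := hm0
      rw [h, pow_zero] at h0
      obtain ⟨z, hz⟩ : ∃ z, φ z ≠ 0 := by
        by_contra hc; push_neg at hc
        exact hφ0 (LinearMap.ext fun z => by simp [hc z])
      have : φ z = 0 := by simpa using LinearMap.congr_fun h0 (φ z)
      exact hz this
    · exact h
  have hm1' : φ ^ (m-1) ≠ 0 := hmmin _ (by omega)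
  -- choose an atom not killed by φ^(m-1)
  obtain ⟨A, hA, hAn⟩ : ∃ A : Submodule R M, IsAtom A ∧ ¬ A ≤ LinearMap.ker (φ^(m-1)) := by
    by_contra hc; push_neg at hc
    have htop : sSup {a : Submodule R M | IsAtom a} = ⊤ := by
      have h := IsSemisimpleModule.sSup_simples_eq_top R M
      simp_rw [isSimpleModule_iff_isAtom] at h
      exact h
    have hle : (⊤ : Submodule R M) ≤ LinearMap.ker (φ^(m-1)) := by
      rw [← htop]
      exact sSup_le (fun a ha => hc a ha)
    apply hm1'
    apply LinearMap.ext
    intro z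
    simpa using hle (Submodule.mem_top : z ∈ ⊤)
  obtain ⟨s, hsA, hs⟩ := SetLike.not_le_iff_exists.mp hAn
  have hs : (φ^(m-1)) s ≠ 0 := by simpa using hs
  have hs0 : s ≠ 0 := fun h => hs (by rw [h, map_zero])
  have hspanA : Submodule.span R {s} = A := by
    have hle : Submodule.span R {s} ≤ A := by
      rw [Submodule.span_le, Set.singleton_subset_iff]; exact hsA
    rcases eq_or_lt_of_le hle with h | h
    · exact h
    · exfalso
      exact hs0 (by simpa using (Submodule.span_singleton_eq_bot).mp (hA.2 _ h))
  have hatomS : IsAtom (Submodule.span R {s}) := hspanA ▸ hA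
  -- injectivity of φ^(m-1) on span {s}
  have hinj : ∀ r : R, (φ^(m-1)) (r • s) = 0 → r • s = 0 := by
    intro r hr
    by_contra hne
    have h1 : Submodule.span R {r • s} = Submodule.span R {s} :=
      aux_span_eq hatomS (Submodule.smul_mem _ _ (Submodule.mem_span_singleton_self s)) hne
    have : s ∈ Submodule.span R {r • s} := by
      rw [h1]; exact Submodule.mem_span_singleton_self s
    obtain ⟨r', hr'⟩ := Submodule.mem_span_singleton.mp this
    apply hs
    rw [← hr', map_smul, hr, smul_zero]
  set x : ℕ → M := fun i => (φ^i) s with hx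
  have hzero : ∀ i, m ≤ i → x i = 0 := by
    intro i hi
    have h1 : φ^i = φ^(i-m) * φ^m := by rw [← pow_add]; congr 1; omega
    show (φ^i) s = 0
    rw [h1, Module.End.mul_apply, hm0, LinearMap.zero_apply, map_zero]
  have hpowadd : ∀ (a b : ℕ) (z : M), (φ^a) ((φ^b) z) = (φ^(a+b)) z := by
    intro a b z
    rw [← Module.End.mul_apply, ← pow_add]
  have hxne : ∀ i < m, x i ≠ 0 := by
    intro i hi h0
    apply hs
    have : (φ^(m-1)) s = (φ^(m-1-i)) (x i) := by
      show _ = (φ^(m-1-i)) ((φ^i) s)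
      rw [hpowadd]
      congr 2
      omega
    rw [this, h0, map_zero]
  have hAtomi : ∀ i < m, IsAtom (Submodule.span R {x i}) := fun i hi =>
    aux_atom_map (φ^i) hatomS (hxne i hi)
  -- the key "triangular" vanishing lemma
  have main : ∀ (c : ℕ → M), (∀ i, ∃ r : R, c i = r • x i) →
      (∑ i ∈ Finset.range m, c i = 0) → ∀ i < m, c i = 0 := by
    intro c hcr hsum0
    have hcr' := hcr
    choose r hr using hcr'
    intro i
    induction i using Nat.strong_induction_on with
    | _ i IH =>
      intro him
      have happ : ∑ j ∈ Finset.range m, (φ^(m-1-i)) (c j) = 0 := by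
        rw [← map_sum, hsum0, map_zero]
      have hsingle : ∑ j ∈ Finset.range m, (φ^(m-1-i)) (c j) = (φ^(m-1-i)) (c i) := by
        apply Finset.sum_eq_single_of_mem i (Finset.mem_range.mpr him)
        intro j hj hji
        rcases lt_or_gt_of_ne hji with h | h
        · rw [IH j h (lt_trans h him), map_zero]
        · rw [hr j, map_smul]
          have : (φ^(m-1-i)) (x j) = (φ^(m-1-i+j)) s := hpowadd _ _ _
          rw [this, show (φ^(m-1-i+j)) s = x (m-1-i+j) from rfl,
            hzero _ (by omega), smul_zero]
      rw [hsingle] at happ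
      rw [hr i, map_smul] at happ
      have h1 : (φ^(m-1-i)) (x i) = (φ^(m-1)) s := by
        rw [show (φ^(m-1-i)) (x i) = (φ^(m-1-i+i)) s from hpowadd _ _ _]
        congr 2
        omega
      rw [h1] at happ
      have h2 : (φ^(m-1)) ((r i) • s) = 0 := by rw [map_smul]; exact happ
      have h3 := hinj _ h2
      rw [hr i, show (r i) • x i = (φ^i) ((r i) • s) from by rw [map_smul], h3, map_zero]
  -- now the direct-summand argument
  set Sp : ℕ → Submodule R M := fun i => Submodule.span R {x i} with hSp
  set Nn : Submodule R M :=
    ⨆ p : Σ _ : Unit, Fin m, Submodule.span R {(φ^(p.2 : ℕ)) s} with hNn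
  have hSpN : ∀ i, i < m → Sp i ≤ Nn := by
    intro i hi
    exact le_iSup (fun p : Σ _ : Unit, Fin m =>
      Submodule.span R {(φ^(p.2 : ℕ)) s}) ⟨(), ⟨i, hi⟩⟩
  obtain ⟨C, hC⟩ := exists_isCompl Nn
  set A' : Submodule R M := ⨆ (i : ℕ) (_ : i < m - 1), Sp i with hA'
  have hA'N : A' ≤ Nn := iSup_le fun i => iSup_le fun hi => hSpN i (by omega)
  have hsupN : Sp (m-1) ⊔ A' = Nn := by
    apply le_antisymm
    · exact sup_le (hSpN _ (by omega)) hA'N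
    · apply iSup_le
      rintro ⟨⟨⟩, j⟩
      by_cases h : (j : ℕ) = m - 1
      · apply le_trans _ le_sup_left
        rw [h]
      · apply le_trans _ le_sup_right
        exact le_iSup₂ (f := fun (i : ℕ) (_ : i < m - 1) => Sp i) (j : ℕ)
          (by have := j.isLt; omega)
  set W : Submodule R M := A' ⊔ C with hW
  have hindep : iSupIndep (fun p : Σ _ : Unit, Fin m =>
      Submodule.span R {(φ^((p.2 : Fin m) : ℕ)) s}) := by
    apply aux_indep_of
    intro μ hμ hsum
    set c : ℕ → M := fun i => if h : i < m then μ ⟨(), ⟨i, h⟩⟩ else 0 with hc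
    have hcr : ∀ i, ∃ r : R, c i = r • x i := by
      intro i
      by_cases h : i < m
      · obtain ⟨r, hr⟩ := Submodule.mem_span_singleton.mp (hμ ⟨(), ⟨i, h⟩⟩)
        exact ⟨r, by simp [hc, h, ← hr]; rfl⟩
      · exact ⟨0, by simp [hc, h]⟩
    have hcsum : ∑ i ∈ Finset.range m, c i = 0 := by
      rw [← aux_sum_sigma (n := m) c, ← hsum]
      apply Finset.sum_congr rfl
      intro p _
      simp [hc, p.2.isLt]
    have hz := main c hcr hcsum
    intro p
    have := hz p.2.val p.2.isLt
    simpa [hc, p.2.isLt] using this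
  have hdisjA : Disjoint (Sp (m-1)) A' := by
    have h0 := hindep ⟨(), ⟨m-1, by omega⟩⟩
    apply h0.mono_right
    apply iSup_le
    intro i
    apply iSup_le
    intro hi
    refine le_trans ?_ (le_iSup _ (⟨(), ⟨i, by omega⟩⟩ : Σ _ : Unit, Fin m))
    · apply le_iSup_of_le
      · exact le_rfl
      · intro h
        simp only [Sigma.mk.inj_iff, heq_eq_eq, Fin.mk.injEq] at h
        omega
  have hdisj : Disjoint (Sp (m-1)) W := by
    rw [disjoint_iff_inf_le]
    have h1 : (A' ⊔ C) ⊓ Nn = A' := by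
      rw [sup_inf_assoc_of_le _ hA'N]
      rw [(disjoint_iff.mp hC.disjoint.symm : C ⊓ Nn = ⊥), sup_bot_eq]
    have h2 : Sp (m-1) ⊓ W ≤ A' := by
      calc Sp (m-1) ⊓ W ≤ Nn ⊓ (A' ⊔ C) := inf_le_inf (hSpN _ (by omega)) le_rfl
      _ = (A' ⊔ C) ⊓ Nn := inf_comm _ _
      _ = A' := h1
    calc Sp (m-1) ⊓ W ≤ Sp (m-1) ⊓ A' := le_inf inf_le_left h2
    _ ≤ ⊥ := disjoint_iff_inf_le.mp hdisjA
  have hcompl : IsCompl (Sp (m-1)) W := by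
    constructor
    · exact hdisj
    · rw [codisjoint_iff]
      rw [hW, ← sup_assoc, hsupN]
      exact codisjoint_iff.mp hC.codisjoint
  -- the projection construction
  set pr := Submodule.linearProjOfIsCompl (Sp (m-1)) W hcompl with hpr
  set f0 : ↥(Submodule.span R {s}) →ₗ[R] M :=
    (φ^(m-1)) ∘ₗ (Submodule.span R {s}).subtype with hf0
  have hf0inj : Function.Injective f0 := by
    rw [← LinearMap.ker_eq_bot, eq_bot_iff]
    rintro ⟨z, hz⟩ hker
    simp only [SetLike.mem_coe, LinearMap.mem_ker] at hker
    obtain ⟨r, hr⟩ := Submodule.mem_span_singleton.mp hz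
    have h1 : (φ^(m-1)) (r • s) = 0 := by
      rw [hr]; exact hker
    have h2 := hinj r h1
    refine Submodule.mem_bot _ |>.mpr (Subtype.ext ?_)
    show z = 0
    rw [← hr]; exact h2
  set e1 := LinearEquiv.ofInjective f0 hf0inj with he1
  have hrange : LinearMap.range f0 = Sp (m-1) := by
    rw [hf0, LinearMap.range_comp, Submodule.range_subtype]
    show Submodule.map (φ^(m-1)) (Submodule.span R {s}) = Submodule.span R {x (m-1)}
    rw [Submodule.map_span, Set.image_singleton]
  set e2 := LinearEquiv.ofEq _ _ hrange with he2
  set β : Module.End R M := (Submodule.span R {s}).subtype ∘ₗ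
    (e1.symm.toLinearMap ∘ₗ (e2.symm.toLinearMap ∘ₗ pr)) with hβ
  have hβrange : ∀ t, β t ∈ Submodule.span R {s} := fun t =>
    SetLike.coe_mem (e1.symm (e2.symm (pr t)))
  have hβ1 : ∀ rr : R, β ((φ^(m-1)) (rr • s)) = rr • s := by
    intro rr
    set z : ↥(Submodule.span R {s}) :=
      ⟨rr • s, Submodule.smul_mem _ _ (Submodule.mem_span_singleton_self s)⟩ with hz
    have hmem : f0 z ∈ Sp (m-1) := by rw [← hrange]; exact ⟨z, rfl⟩
    have hmem' : f0 z ∈ LinearMap.range f0 := ⟨z, rfl⟩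
    have h1 : pr ((φ^(m-1)) (rr • s)) = ⟨f0 z, hmem⟩ :=
      Submodule.linearProjOfIsCompl_apply_left hcompl ⟨f0 z, hmem⟩
    show (Submodule.span R {s}).subtype (e1.symm (e2.symm (pr ((φ^(m-1)) (rr • s))))) = rr • s
    rw [h1]
    have h2 : e2.symm ⟨f0 z, hmem⟩ = ⟨f0 z, hmem'⟩ := by
      apply Subtype.ext
      simp [he2]
    rw [h2]
    have h3 : e1.symm ⟨f0 z, hmem'⟩ = z := by
      rw [LinearEquiv.symm_apply_eq]
      apply Subtype.ext
      simp [he1]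
    rw [h3]
    rfl
  have hβ2 : ∀ i, i < m - 1 → ∀ t, t ∈ Sp i → β t = 0 := by
    intro i hi t ht
    have htW : t ∈ W := by
      apply SetLike.le_def.mp le_sup_left
      exact SetLike.le_def.mp (le_iSup₂ (f := fun (j : ℕ) (_ : j < m - 1) => Sp j) i hi) ht
    have h1 : pr t = 0 := Submodule.linearProjOfIsCompl_apply_right hcompl ⟨t, htW⟩
    show (Submodule.span R {s}).subtype (e1.symm (e2.symm (pr t))) = 0
    rw [h1, map_zero, map_zero, map_zero]
  set π : Module.End R M := ∑ i ∈ Finset.range m, φ^i * β * φ^(m-1-i) with hπ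
  have happ : ∀ t, π t = ∑ i ∈ Finset.range m, (φ^i) (β ((φ^(m-1-i)) t)) := by
    intro t
    rw [hπ, LinearMap.sum_apply]
    apply Finset.sum_congr rfl
    intro i _
    rfl
  have hfix : ∀ i, i < m → π (x i) = x i := by
    intro i hi
    rw [happ]
    rw [Finset.sum_eq_single_of_mem i (Finset.mem_range.mpr hi)]
    · have h1 : (φ^(m-1-i)) (x i) = (φ^(m-1)) s := by
        rw [show (φ^(m-1-i)) (x i) = (φ^(m-1-i+i)) s from hpowadd _ _ _]
        congr 2
        omega
      rw [h1]
      have hb := hβ1 1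
      rw [one_smul] at hb
      rw [hb]
    · intro j hj hji
      have hjm := Finset.mem_range.mp hj
      rcases lt_or_gt_of_ne hji with h | h
      · have h1 : (φ^(m-1-j)) (x i) = x (m-1-j+i) := hpowadd _ _ _
        rw [h1, hzero _ (by omega), map_zero, map_zero]
      · have h1 : (φ^(m-1-j)) (x i) = x (m-1-j+i) := hpowadd _ _ _
        rw [h1, hβ2 (m-1-j+i) (by omega) _ (Submodule.mem_span_singleton_self _), map_zero]
  have hNfix : ∀ t, t ∈ Nn → π t = t := by
    have hker : Nn ≤ LinearMap.ker (π - 1) := by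
      apply iSup_le
      rintro ⟨⟨⟩, j⟩
      rw [Submodule.span_le, Set.singleton_subset_iff]
      simp only [SetLike.mem_coe, LinearMap.mem_ker, LinearMap.sub_apply, Module.End.one_apply]
      rw [hfix j j.isLt]
      exact sub_self _
    intro t ht
    have h1 := hker ht
    rw [LinearMap.mem_ker, LinearMap.sub_apply, Module.End.one_apply, sub_eq_zero] at h1
    exact h1
  have hrangeN : ∀ t, π t ∈ Nn := by
    intro t
    rw [happ]
    apply Submodule.sum_mem
    intro i hi
    obtain ⟨r, hr⟩ := Submodule.mem_span_singleton.mp (hβrange ((φ^(m-1-i)) t))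
    rw [← hr, map_smul]
    exact SetLike.le_def.mp (hSpN i (Finset.mem_range.mp hi))
      (Submodule.smul_mem _ _ (Submodule.mem_span_singleton_self _))
  have hidem : IsIdempotentElem π := by
    apply LinearMap.ext
    intro t
    rw [Module.End.mul_apply]
    exact hNfix (π t) (hrangeN t)
  have hcommπ : π * φ = φ * π := by
    have h1 : π * φ = ∑ i ∈ Finset.range m, φ^i * β * φ^(m-i) := by
      rw [hπ, Finset.sum_mul]
      apply Finset.sum_congr rfl
      intro i hi
      have hi' := Finset.mem_range.mp hi
      rw [mul_assoc (φ^i * β), ← pow_succ, (by omega : m-1-i+1 = m-i)]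
    have h2 : π * φ = ∑ j ∈ Finset.range (m-1), φ^(j+1) * β * φ^(m-1-j) := by
      rw [h1, aux_sum_shift hm1 (fun i => φ^i * β * φ^(m-i))]
      have hlast0 : (φ^(0:ℕ) * β * φ^(m-0) : Module.End R M) = 0 := by
        rw [Nat.sub_zero, hm0, mul_zero]
      rw [hlast0, add_zero]
      apply Finset.sum_congr rfl
      intro j hj
      rw [(by omega : m - (j+1) = m-1-j)]
    have h3 : φ * π = ∑ j ∈ Finset.range (m-1), φ^(j+1) * β * φ^(m-1-j) := by
      rw [hπ, Finset.mul_sum]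
      rw [aux_sum_split hm1 (fun i => φ * (φ^i * β * φ^(m-1-i)))]
      have hlast0 : φ * (φ^(m-1) * β * φ^(m-1-(m-1))) = 0 := by
        rw [(by omega : m-1-(m-1) = 0), pow_zero, mul_one, ← mul_assoc, ← pow_succ',
          (by omega : m-1+1 = m), hm0, zero_mul]
      rw [hlast0, add_zero]
      apply Finset.sum_congr rfl
      intro j hj
      rw [← mul_assoc, ← mul_assoc, ← pow_succ']
    rw [h2, h3]
  have hx0 : x 0 = s := by
    show (φ^(0:ℕ)) s = s
    rw [pow_zero]
    rfl
  have hπ0 : π ≠ 0 := by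
    intro h
    apply hs0
    have h1 : π s = s := by
      rw [← hx0]
      exact hfix 0 hm1
    rw [h] at h1
    simpa using h1.symm
  have hπ1 : π = 1 := by
    by_contra hne
    exact hind ⟨π, hidem, hπ0, hne, hcommπ⟩
  have htop : Nn = ⊤ := by
    rw [eq_top_iff]
    intro t _
    have h1 : π t = t := by rw [hπ1]; rfl
    rw [← h1]
    exact hrangeN t
  exact ⟨m, s, hm1, hAtomi, hzero, main, htop⟩

end bwd

/-- For a nonzero nilpotent endomorphism `φ` of a semisimple module `M`: `M` admits a nilpotent
Jordan normal base with respect to `φ` consisting of one block iff `φ` is an indecomposable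
nilpotent element of `Hom_R(M,M)`, i.e. no idempotent `e` with `0 ≠ e ≠ 1` commutes with `φ`. -/
theorem stmt_5 {R : Type*} [Ring R] {M : Type*} [AddCommGroup M] [Module R M]
    [IsSemisimpleModule R M] (φ : Module.End R M) (hφ0 : φ ≠ 0) (hφ : IsNilpotent φ) :
    (∃ (n : ℕ) (x : ℕ → M), IsNilpotentJordanBase φ (fun _ : Unit => n) (fun _ => x)) ↔
      ¬∃ e : Module.End R M, IsIdempotentElem e ∧ e ≠ 0 ∧ e ≠ 1 ∧ e * φ = φ * e := by
  classical
  constructor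
  · rintro ⟨n, x, hb⟩
    exact fwd φ hφ hb
  · intro hind
    obtain ⟨m, s, hm1, hAtomi, hzero, main, htop⟩ := bwd_core φ hφ0 hφ hind
    refine ⟨m, fun i => (φ^i) s, ?_, ?_, ?_, ?_, ?_, ?_, ?_⟩
    · exact fun _ => hm1
    · exact fun _ i hi => isSimpleModule_iff_isAtom.mpr (hAtomi i hi)
    · apply aux_indep_of
      intro μ hμ hsum
      set c : ℕ → M := fun i => if h : i < m then μ ⟨(), ⟨i, h⟩⟩ else 0 with hc
      have hcr : ∀ i, ∃ r : R, c i = r • (φ^i) s := by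
        intro i
        by_cases h : i < m
        · obtain ⟨r, hr⟩ := Submodule.mem_span_singleton.mp (hμ ⟨(), ⟨i, h⟩⟩)
          exact ⟨r, by simp [hc, h, ← hr]⟩
        · exact ⟨0, by simp [hc, h]⟩
      have hcsum : ∑ i ∈ Finset.range m, c i = 0 := by
        rw [← aux_sum_sigma (n := m) c, ← hsum]
        apply Finset.sum_congr rfl
        intro p _
        simp [hc, p.2.isLt]
      have hz := main c hcr hcsum
      intro p
      have := hz p.2.val p.2.isLt
      simpa [hc, p.2.isLt] using this
    · exact htop
    · intro _ i
      rw [← Module.End.mul_apply, ← pow_succ']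
    · exact fun _ i hi => hzero i hi
    · exact ⟨m, fun _ => le_rfl⟩
end

section
/- If R is a local ring and φ a nilpotent R-endomorphism of the semisimple left R-module M with nilpotent Jordan normal base {x_{γ,i}}, then the kernel of the homomorphism Φ((f_γ)) = Σ_γ f_γ(t) ∗ x_{γ,1} equals exactly ⊕_{γ∈Γ} (J(R)[t] + (t^{k_γ})). -/
open Polynomial

/-- The action of a polynomial `f = a₁ + a₂ t + ⋯ + a_{n+1} tⁿ ∈ R[t]` on `u ∈ M` induced by
the endomorphism `φ`: `f ∗ u = a₁ u + a₂ φ(u) + ⋯ + a_{n+1} φⁿ(u)`. -/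
noncomputable def polyAction {R : Type*} [Ring R] {M : Type*} [AddCommGroup M] [Module R M]
    (φ : Module.End R M) (f : Polynomial R) (u : M) : M :=
  f.sum fun i a => a • (φ ^ i) u

/-- The map `Φ : ⊕_{γ∈Γ} R[t] → M`, `Φ((f_γ)_γ) = Σ_γ f_γ(t) ∗ x_{γ,1}`, associated to a
nilpotent Jordan normal base `x` (whose first block elements are `x γ 0`). -/
noncomputable def jordanPhi {R : Type*} [Ring R] {M : Type*} [AddCommGroup M] [Module R M]
    (φ : Module.End R M) {Γ : Type*} (x : Γ → ℕ → M) (f : Γ →₀ Polynomial R) : M :=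
  f.sum fun γ p => polyAction φ p (x γ 0)

section Aux

variable {R : Type*} [Ring R]

/-- In a (possibly noncommutative) local ring, a left-invertible element is a unit. -/
lemma aux_isUnit_of_left_inv [IsLocalRing R] {a b : R} (hba : b * a = 1) : IsUnit a := by
  have he : (a * b) * (a * b) = a * b := by
    rw [mul_assoc, ← mul_assoc b a b, hba, one_mul]
  rcases IsLocalRing.isUnit_or_isUnit_of_add_one
      (a := a * b) (b := 1 - a * b) (by abel) with hu | hu
  · have h0 : (a * b) * (1 - a * b) = (a * b) * 0 := by
      rw [mul_sub, mul_one, he, sub_self, mul_zero]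
    have h1 : (1 : R) - a * b = 0 := hu.mul_left_cancel h0
    have hab : a * b = 1 := by
      have := sub_eq_zero.mp h1
      exact this.symm
    exact ⟨⟨a, b, hab, hba⟩, rfl⟩
  · have h0 : (1 - a * b) * (a * b) = (1 - a * b) * 0 := by
      rw [sub_mul, one_mul, he, sub_self, mul_zero]
    have h1 : a * b = 0 := hu.mul_left_cancel h0
    have ha : a = 0 := by
      have h2 : (a * b) * a = a := by rw [mul_assoc, hba, mul_one]
      rw [h1, zero_mul] at h2
      exact h2.symm
    exfalso
    apply one_ne_zero (α := R)
    rw [← hba, ha, mul_zero]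

/-- In a (possibly noncommutative) local ring, a right-invertible element is a unit. -/
lemma aux_isUnit_of_right_inv [IsLocalRing R] {a b : R} (hab : a * b = 1) : IsUnit a := by
  have he : (b * a) * (b * a) = b * a := by
    rw [mul_assoc, ← mul_assoc a b a, hab, one_mul]
  rcases IsLocalRing.isUnit_or_isUnit_of_add_one
      (a := b * a) (b := 1 - b * a) (by abel) with hu | hu
  · have h0 : (b * a) * (1 - b * a) = (b * a) * 0 := by
      rw [mul_sub, mul_one, he, sub_self, mul_zero]
    have h1 : (1 : R) - b * a = 0 := hu.mul_left_cancel h0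
    have hba : b * a = 1 := (sub_eq_zero.mp h1).symm
    exact ⟨⟨a, b, hab, hba⟩, rfl⟩
  · have h0 : (1 - b * a) * (b * a) = (1 - b * a) * 0 := by
      rw [sub_mul, one_mul, he, sub_self, mul_zero]
    have h1 : b * a = 0 := hu.mul_left_cancel h0
    have ha : a = 0 := by
      have h2 : a * (b * a) = a := by rw [← mul_assoc, hab, one_mul]
      rw [h1, mul_zero] at h2
      exact h2.symm
    exfalso
    apply one_ne_zero (α := R)
    rw [← hab, ha, zero_mul]

/-- In a local ring, every nonunit lies in the Jacobson radical. -/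
lemma aux_nonunit_mem_jacobson [IsLocalRing R] {a : R} (ha : ¬ IsUnit a) :
    a ∈ Ideal.jacobson (⊥ : Ideal R) := by
  rw [Ideal.jacobson, Submodule.mem_sInf]
  rintro I ⟨-, hImax⟩
  by_contra haI
  have hlt : I < I ⊔ Ideal.span {a} :=
    left_lt_sup.mpr fun hle => haI (hle (Submodule.mem_span_singleton_self a))
  have htop : I ⊔ Ideal.span {a} = ⊤ := hImax.out.2 _ hlt
  have h1 : (1 : R) ∈ I ⊔ Ideal.span {a} := htop ▸ Submodule.mem_top
  obtain ⟨y, hyI, z, hz, hyz⟩ := Submodule.mem_sup.mp h1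
  obtain ⟨r, rfl⟩ := Submodule.mem_span_singleton.mp hz
  rcases IsLocalRing.isUnit_or_isUnit_of_add_one hyz with hy | hra
  · exact hImax.out.1 (Ideal.eq_top_of_isUnit_mem I hyI hy)
  · apply ha
    rcases hra with ⟨u, hu⟩
    refine aux_isUnit_of_left_inv (b := (↑u⁻¹ : R) * r) ?_
    have hu' : r * a = (↑u : R) := by rw [hu, smul_eq_mul]
    rw [mul_assoc, hu', u.inv_mul]

variable {M : Type*} [AddCommGroup M] [Module R M]

lemma aux_ne_zero_of_simple_span {x : M}
    (hs : IsSimpleModule R ↥(Submodule.span R {x})) : x ≠ 0 := by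
  rintro rfl
  rw [Submodule.span_zero_singleton] at hs
  have : Nontrivial ↥(⊥ : Submodule R M) := IsSimpleModule.nontrivial R _
  exact false_of_nontrivial_of_subsingleton ↥(⊥ : Submodule R M)

lemma aux_smul_eq_zero_of_mem_jacobson {x : M}
    (hs : IsSimpleModule R ↥(Submodule.span R {x})) {a : R}
    (ha : a ∈ Ideal.jacobson (⊥ : Ideal R)) : a • x = 0 := by
  haveI := hs
  have hx : x ≠ 0 := aux_ne_zero_of_simple_span hs
  set N : Submodule R M := Submodule.span R {x} with hN
  set m : N := ⟨x, Submodule.mem_span_singleton_self x⟩ with hm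
  have hm0 : m ≠ 0 := by
    intro hc
    apply hx
    exact congrArg Subtype.val hc
  have hmax : Ideal.IsMaximal (LinearMap.ker (LinearMap.toSpanSingleton R N m)) :=
    IsSimpleModule.ker_toSpanSingleton_isMaximal R hm0
  have hle : Ideal.jacobson (⊥ : Ideal R) ≤
      LinearMap.ker (LinearMap.toSpanSingleton R N m) :=
    sInf_le ⟨bot_le, hmax⟩
  have h0 : a • m = 0 := LinearMap.mem_ker.mp (hle ha)
  have : (↑(a • m) : M) = (↑(0 : N) : M) := congrArg Subtype.val h0
  simpa using this

/-- In a local ring, if `a` kills the generator of a simple cyclic module, then `a` is in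
the Jacobson radical. -/
lemma aux_mem_jacobson_of_smul_eq_zero [IsLocalRing R] {x : M}
    (hs : IsSimpleModule R ↥(Submodule.span R {x})) {a : R}
    (ha : a • x = 0) : a ∈ Ideal.jacobson (⊥ : Ideal R) := by
  apply aux_nonunit_mem_jacobson
  intro hu
  have hx : x ≠ 0 := aux_ne_zero_of_simple_span hs
  apply hx
  rcases hu with ⟨u, rfl⟩
  calc x = ((↑u⁻¹ : R) * (↑u : R)) • x := by rw [u.inv_mul, one_smul]
    _ = (↑u⁻¹ : R) • ((↑u : R) • x) := by rw [mul_smul]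
    _ = 0 := by rw [ha, smul_zero]

/-- Membership in `J[t] + (t^n)` is equivalent to all coefficients below `n` lying in `J`. -/
lemma aux_mem_sup_iff_coeff (J : Ideal R) (n : ℕ) (p : Polynomial R) :
    p ∈ Ideal.map (Polynomial.C : R →+* Polynomial R) J
        ⊔ Ideal.span {(Polynomial.X : Polynomial R) ^ n} ↔
      ∀ i < n, p.coeff i ∈ J := by
  constructor
  · intro hp
    obtain ⟨q, hq, r, hr, hp⟩ := Submodule.mem_sup.mp hp
    have hq' : ∀ i, q.coeff i ∈ J := by
      have hq2 : q ∈ Ideal.span ((Polynomial.C : R →+* Polynomial R) '' J) := hq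
      refine Submodule.span_induction ?_ ?_ ?_ ?_ hq2
      · rintro _ ⟨a, haJ, rfl⟩ i
        rw [Polynomial.coeff_C]
        split
        · exact haJ
        · exact J.zero_mem
      · intro i; simp
      · intro s t _ _ hs ht i
        rw [Polynomial.coeff_add]
        exact J.add_mem (hs i) (ht i)
      · intro g s _ hs i
        rw [smul_eq_mul, Polynomial.coeff_mul]
        exact Ideal.sum_mem J fun c _ => J.mul_mem_left _ (hs c.2)
    have hr' : ∀ i < n, r.coeff i = 0 := by
      obtain ⟨g, hg⟩ := Submodule.mem_span_singleton.mp hr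
      intro i hi
      rw [← hg, smul_eq_mul, Polynomial.coeff_mul_X_pow', if_neg (by omega)]
    intro i hi
    rw [← hp, Polynomial.coeff_add, hr' i hi, add_zero]
    exact hq' i
  · intro hc
    rw [Polynomial.as_sum_range p]
    apply Ideal.sum_mem
    intro i _
    by_cases hi : i < n
    · apply Ideal.mem_sup_left
      have h1 : (Polynomial.C (p.coeff i) : Polynomial R) ∈
          Ideal.map (Polynomial.C : R →+* Polynomial R) J :=
        Ideal.mem_map_of_mem _ (hc i hi)
      have h2 := Ideal.mul_mem_left _ ((Polynomial.X : Polynomial R) ^ i) h1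
      rwa [Polynomial.X_pow_mul, Polynomial.C_mul_X_pow_eq_monomial] at h2
    · apply Ideal.mem_sup_right
      refine Submodule.mem_span_singleton.mpr
        ⟨Polynomial.C (p.coeff i) * Polynomial.X ^ (i - n), ?_⟩
      rw [smul_eq_mul, mul_assoc, ← pow_add, Nat.sub_add_cancel (le_of_not_gt hi),
        Polynomial.C_mul_X_pow_eq_monomial]

/-- Finite sums of members of an independent family of submodules vanish termwise. -/
lemma aux_indep_sum_zero {ι : Type*} {N : ι → Submodule R M} (hN : iSupIndep N)
    (s : Finset ι) (m : ι → M) (hm : ∀ i, m i ∈ N i) (hsum : ∑ i ∈ s, m i = 0) :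
    ∀ i ∈ s, m i = 0 := by
  classical
  have hinj := hN.dfinsupp_lsum_injective
  set v : Π₀ i, ↥(N i) := ∑ i ∈ s, DFinsupp.single i ⟨m i, hm i⟩ with hv
  have hlv : DFinsupp.lsum ℕ (fun i => (N i).subtype) v = 0 := by
    rw [hv, map_sum]
    simpa [DFinsupp.lsum_single] using hsum
  have hv0 : v = 0 := hinj (by rw [hlv, map_zero])
  intro i hi
  have h1 : v i = ⟨m i, hm i⟩ := by
    rw [hv, DFinsupp.finset_sum_apply]
    rw [Finset.sum_eq_single_of_mem i hi]
    · exact DFinsupp.single_eq_same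
    · intro j _ hj
      exact DFinsupp.single_eq_of_ne hj.symm
  have h2 : (⟨m i, hm i⟩ : N i) = 0 := by rw [← h1, hv0]; rfl
  exact congrArg Subtype.val h2

/-- The action of `f` on `x γ 0` in terms of coefficients. -/
lemma aux_polyAction_block {φ : Module.End R M} {Γ : Type*} {k : Γ → ℕ} {x : Γ → ℕ → M}
    (h : IsNilpotentJordanBase φ k x) (γ : Γ) (p : Polynomial R) :
    polyAction φ p (x γ 0) = ∑ i ∈ Finset.range (k γ), p.coeff i • x γ i := by
  have hpow : ∀ i, (φ ^ i) (x γ 0) = x γ i := by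
    intro i
    induction i with
    | zero => simp
    | succ n ih =>
      rw [pow_succ', Module.End.mul_apply, ih, h.step γ n]
  unfold polyAction
  rw [Polynomial.sum_def]
  simp only [hpow]
  have h1 : ∑ n ∈ p.support, p.coeff n • x γ n
      = ∑ n ∈ p.support ∪ Finset.range (k γ), p.coeff n • x γ n := by
    refine Finset.sum_subset Finset.subset_union_left ?_
    intro i _ hi
    rw [Polynomial.notMem_support_iff.mp hi, zero_smul]
  have h2 : ∑ n ∈ Finset.range (k γ), p.coeff n • x γ n
      = ∑ n ∈ p.support ∪ Finset.range (k γ), p.coeff n • x γ n := by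
    refine Finset.sum_subset Finset.subset_union_right ?_
    intro i _ hi
    rw [h.zero_after γ i (le_of_not_gt (by simpa using hi)), smul_zero]
  rw [h1, h2]

end Aux

/-- If `R` is a local ring, the kernel of `Φ` equals exactly
`⊕_{γ∈Γ} (J(R)[t] + (t^{k_γ}))`. -/
theorem stmt_10 {R : Type*} [Ring R] [IsLocalRing R] {M : Type*} [AddCommGroup M] [Module R M]
    (φ : Module.End R M) {Γ : Type*} (k : Γ → ℕ) (x : Γ → ℕ → M)
    (h : IsNilpotentJordanBase φ k x) :
    ∀ f : Γ →₀ Polynomial R, jordanPhi φ x f = 0 ↔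
      (∀ γ, f γ ∈ Ideal.map (Polynomial.C : R →+* Polynomial R) (Ideal.jacobson (⊥ : Ideal R))
          ⊔ Ideal.span {(Polynomial.X : Polynomial R) ^ k γ}) := by
  classical
  intro f
  constructor
  · intro h0 γ
    rw [aux_mem_sup_iff_coeff]
    intro i hi
    -- set up the independent decomposition
    set m : (Σ γ : Γ, Fin (k γ)) → M := fun p => (f p.1).coeff p.2.val • x p.1 p.2.val with hm
    have hmem : ∀ p, m p ∈ Submodule.span R {x p.1 p.2.val} := fun p =>
      Submodule.smul_mem _ _ (Submodule.mem_span_singleton_self _)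
    set s : Finset (Σ γ : Γ, Fin (k γ)) :=
      f.support.sigma (fun γ => (Finset.univ : Finset (Fin (k γ)))) with hs
    have hsum : ∑ p ∈ s, m p = jordanPhi φ x f := by
      rw [hs, Finset.sum_sigma]
      unfold jordanPhi
      rw [Finsupp.sum]
      refine Finset.sum_congr rfl fun γ _ => ?_
      rw [aux_polyAction_block h γ (f γ), ← Fin.sum_univ_eq_sum_range]
    have hzero := aux_indep_sum_zero h.indep s m hmem (by rw [hsum, h0])
    by_cases hγ : γ ∈ f.support
    · have hp : (⟨γ, ⟨i, hi⟩⟩ : Σ γ : Γ, Fin (k γ)) ∈ s := by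
        rw [hs, Finset.mem_sigma]
        exact ⟨hγ, Finset.mem_univ _⟩
      have := hzero _ hp
      rw [hm] at this
      exact aux_mem_jacobson_of_smul_eq_zero (h.simple γ i hi) this
    · rw [Finsupp.notMem_support_iff.mp hγ, Polynomial.coeff_zero]
      exact Submodule.zero_mem _
  · intro hf
    unfold jordanPhi
    rw [Finsupp.sum]
    apply Finset.sum_eq_zero
    intro γ _
    rw [aux_polyAction_block h γ (f γ)]
    apply Finset.sum_eq_zero
    intro i hi
    have hi' : i < k γ := Finset.mem_range.mp hi
    have hJ : (f γ).coeff i ∈ Ideal.jacobson (⊥ : Ideal R) :=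
      (aux_mem_sup_iff_coeff _ _ _).mp (hf γ) i hi'
    exact aux_smul_eq_zero_of_mem_jacobson (h.simple γ i hi') hJ
end

section
/- Let φ be a nilpotent R-endomorphism of a finitely generated semisimple left R-module M with Jordan normal base {x_{γ,i}}, γ ∈ Γ finite, and Φ as above. Then M(Φ) = {P ∈ M_{Γ×Γ}(R[t]) | fP ∈ ker(Φ) for all f ∈ ker(Φ)} is a Z(R)-subalgebra of M_{Γ×Γ}(R[t]), and for each P ∈ M(Φ) the rule ψ_P(Φ(f)) = Φ(fP) is a well-defined R-endomorphism of M commuting with φ; moreover P ↦ ψ_P is a Z(R)-algebra homomorphism from M(Φ)^op to C_φ. -/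
set_option linter.unusedSectionVars false
set_option maxHeartbeats 1000000
set_option synthInstance.maxHeartbeats 1000000


open Polynomial

/-- The map `Φ : (R[t])^Γ → M`, `Φ((f_γ)_γ) = Σ_γ f_γ(t) ∗ x_{γ,1}`, associated to a
nilpotent Jordan normal base `x` with finite block set `Γ`. -/
noncomputable def jordanPhiF {R : Type*} [Ring R] {M : Type*} [AddCommGroup M] [Module R M]
    (φ : Module.End R M) {Γ : Type*} [Fintype Γ] (x : Γ → ℕ → M) (f : Γ → Polynomial R) : M :=
  ∑ γ, polyAction φ (f γ) (x γ 0)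


section Aux
variable {R : Type*} [Ring R] {M : Type*} [AddCommGroup M] [Module R M]
  (φ : Module.End R M)

lemma polyAction_def (f : R[X]) (u : M) :
    polyAction φ f u = f.sum fun i a => a • (φ ^ i) u := rfl

lemma polyAction_zero (u : M) : polyAction φ 0 u = 0 := Polynomial.sum_zero_index _

lemma polyAction_monomial (n : ℕ) (a : R) (u : M) :
    polyAction φ (monomial n a) u = a • (φ ^ n) u :=
  Polynomial.sum_monomial_index a _ (zero_smul R _)

lemma polyAction_add (f g : R[X]) (u : M) :
    polyAction φ (f + g) u = polyAction φ f u + polyAction φ g u :=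
  Polynomial.sum_add_index f g _ (fun _ => zero_smul R _) (fun _ a b => add_smul a b _)

lemma polyAction_smul (r : R) (f : R[X]) (u : M) :
    polyAction φ (r • f) u = r • polyAction φ f u := by
  rw [polyAction_def,
    Polynomial.sum_smul_index f r (fun i a => a • (φ ^ i) u) (fun i => zero_smul R _),
    polyAction_def, Polynomial.smul_sum]
  exact Finset.sum_congr rfl (fun i _ => by dsimp only; rw [mul_smul])

lemma polyAction_X_mul (f : R[X]) (u : M) :
    polyAction φ (X * f) u = φ (polyAction φ f u) := by
  induction f using Polynomial.induction_on' with
  | add p q hp hq => rw [mul_add, polyAction_add, polyAction_add, hp, hq, map_add]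
  | monomial n a =>
      rw [X_mul_monomial, polyAction_monomial, polyAction_monomial, map_smul,
        pow_succ', Module.End.mul_apply]

lemma polyAction_mul_C (c : R) (hc : c ∈ Subring.center R) (f : R[X]) (u : M) :
    polyAction φ (f * C c) u = c • polyAction φ f u := by
  induction f using Polynomial.induction_on' with
  | add p q hp hq => rw [add_mul, polyAction_add, polyAction_add, hp, hq, smul_add]
  | monomial n a =>
      rw [monomial_mul_C, polyAction_monomial, polyAction_monomial, ← mul_smul,
        (Subring.mem_center_iff.mp hc a)]

end Aux

section Phi
variable {R : Type*} [Ring R] {M : Type*} [AddCommGroup M] [Module R M]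
  (φ : Module.End R M) {Γ : Type*} [Fintype Γ] [DecidableEq Γ] (x : Γ → ℕ → M)

/-- `Φ` as an `R`-linear map. -/
noncomputable def jordanPhiLin : (Γ → Polynomial R) →ₗ[R] M where
  toFun f := jordanPhiF φ x f
  map_add' f g := by
    unfold jordanPhiF
    rw [← Finset.sum_add_distrib]
    exact Finset.sum_congr rfl fun γ _ => polyAction_add φ (f γ) (g γ) _
  map_smul' r f := by
    unfold jordanPhiF
    rw [RingHom.id_apply, Finset.smul_sum]
    exact Finset.sum_congr rfl fun γ _ => polyAction_smul φ r (f γ) _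

@[simp] lemma jordanPhiLin_apply (f : Γ → Polynomial R) :
    jordanPhiLin φ x f = jordanPhiF φ x f := rfl

lemma jordanPhi_pow_apply {k : Γ → ℕ} (h : IsNilpotentJordanBase φ k x) (γ : Γ) (i : ℕ) :
    (φ ^ i) (x γ 0) = x γ i := by
  induction i with
  | zero => rfl
  | succ n ih => rw [pow_succ', Module.End.mul_apply, ih, h.step]

lemma jordanPhi_surjective {k : Γ → ℕ} (h : IsNilpotentJordanBase φ k x) :
    Function.Surjective (jordanPhiLin φ x) := by
  rw [← LinearMap.range_eq_top, eq_top_iff, ← h.spans]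
  refine iSup_le fun p => Submodule.span_le.mpr ?_
  rintro u rfl
  refine ⟨Pi.single p.1 (Polynomial.monomial p.2.val 1), ?_⟩
  rw [jordanPhiLin_apply]
  unfold jordanPhiF
  rw [Finset.sum_eq_single_of_mem p.1 (Finset.mem_univ _)]
  · rw [Pi.single_eq_same, polyAction_monomial, one_smul, jordanPhi_pow_apply φ x h]
  · intro γ _ hγ
    rw [Pi.single_eq_of_ne hγ, polyAction_zero]

lemma jordanPhi_X_mul (f : Γ → Polynomial R) :
    jordanPhiF φ x (fun γ => Polynomial.X * f γ) = φ (jordanPhiF φ x f) := by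
  unfold jordanPhiF
  rw [map_sum]
  exact Finset.sum_congr rfl fun γ _ => polyAction_X_mul φ (f γ) _

lemma jordanPhi_mul_C (c : R) (hc : c ∈ Subring.center R) (f : Γ → Polynomial R) :
    jordanPhiF φ x (fun γ => f γ * Polynomial.C c) = c • jordanPhiF φ x f := by
  unfold jordanPhiF
  rw [Finset.smul_sum]
  exact Finset.sum_congr rfl fun γ _ => polyAction_mul_C φ c hc (f γ) _

/-- Right multiplication by a matrix as an `R`-linear map on row vectors. -/
noncomputable def vecMulLM (P : Matrix Γ Γ (Polynomial R)) :
    (Γ → Polynomial R) →ₗ[R] (Γ → Polynomial R) where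
  toFun f := Matrix.vecMul f P
  map_add' f g := by
    funext j
    simp [Matrix.vecMul, dotProduct, add_mul, Finset.sum_add_distrib]
  map_smul' r f := by
    funext j
    simp [Matrix.vecMul, dotProduct, smul_mul_assoc, Finset.smul_sum]

@[simp] lemma vecMulLM_apply (P : Matrix Γ Γ (Polynomial R)) (f : Γ → Polynomial R) :
    vecMulLM P f = Matrix.vecMul f P := rfl

lemma vecMul_X_smul (P : Matrix Γ Γ (Polynomial R)) (f : Γ → Polynomial R) :
    Matrix.vecMul (fun γ => Polynomial.X * f γ) P =
      fun j => Polynomial.X * Matrix.vecMul f P j := by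
  funext j
  simp [Matrix.vecMul, dotProduct, Finset.mul_sum, mul_assoc]

end Phi

/-- `M(Φ) = {P | fP ∈ ker Φ for all f ∈ ker Φ}` is a `Z(R)`-subalgebra of `M_{Γ×Γ}(R[t])`,
for each `P ∈ M(Φ)` the rule `ψ_P(Φ(f)) = Φ(fP)` well-defines an `R`-endomorphism of `M`
commuting with `φ`, and `P ↦ ψ_P` is a `Z(R)`-algebra homomorphism `M(Φ)^op → C_φ`. -/
theorem stmt_11 {R : Type*} [Ring R] {M : Type*} [AddCommGroup M] [Module R M]
    [Module.Finite R M] [IsSemisimpleModule R M]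
    (φ : Module.End R M) {Γ : Type*} [Fintype Γ] [DecidableEq Γ] (k : Γ → ℕ) (x : Γ → ℕ → M)
    (h : IsNilpotentJordanBase φ k x) :
    ∃ S : Subalgebra (Subring.center R) (Matrix Γ Γ (Polynomial R)),
      (∀ P : Matrix Γ Γ (Polynomial R), P ∈ S ↔
        ∀ f : Γ → Polynomial R, jordanPhiF φ x f = 0 → jordanPhiF φ x (Matrix.vecMul f P) = 0) ∧
      ∃ Ψ : (↥S)ᵐᵒᵖ →ₐ[Subring.center R] Module.End R M,
        (∀ P : ↥S, Ψ (MulOpposite.op P) * φ = φ * Ψ (MulOpposite.op P)) ∧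
        (∀ (P : ↥S) (f : Γ → Polynomial R),
          Ψ (MulOpposite.op P) (jordanPhiF φ x f) =
            jordanPhiF φ x (Matrix.vecMul f (P : Matrix Γ Γ (Polynomial R)))) := by
  classical
  set Φl := jordanPhiLin φ x with hΦl
  have hsurj : Function.Surjective Φl := jordanPhi_surjective φ x h
  have hΦF : ∀ f : Γ → Polynomial R, jordanPhiF φ x f = Φl f := fun f => rfl
  have hX : ∀ f : Γ → Polynomial R,
      φ (Φl f) = Φl (fun γ => Polynomial.X * f γ) := fun f => (jordanPhi_X_mul φ x f).symm
  let S : Subalgebra (Subring.center R) (Matrix Γ Γ (Polynomial R)) :=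
  { carrier := {P | ∀ f : Γ → Polynomial R,
      jordanPhiF φ x f = 0 → jordanPhiF φ x (Matrix.vecMul f P) = 0}
    mul_mem' := by
      intro P Q hP hQ f hf
      rw [← Matrix.vecMul_vecMul]
      exact hQ _ (hP f hf)
    one_mem' := by
      intro f hf
      rwa [Matrix.vecMul_one]
    add_mem' := by
      intro P Q hP hQ f hf
      rw [Matrix.vecMul_add, hΦF, map_add, ← hΦF, ← hΦF, hP f hf, hQ f hf, add_zero]
    zero_mem' := by
      intro f hf
      rw [Matrix.vecMul_zero, hΦF, map_zero]
    algebraMap_mem' := by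
      intro c f hf
      have hd : Matrix.vecMul f (algebraMap (Subring.center R) (Matrix Γ Γ (Polynomial R)) c)
          = fun γ => f γ * Polynomial.C (c : R) := by
        funext j
        rw [Matrix.algebraMap_eq_diagonal, Matrix.vecMul_diagonal]
        congr 1
      rw [hd, jordanPhi_mul_C φ x (c : R) c.2 f, hf, smul_zero] }
  have hmemS : ∀ P : Matrix Γ Γ (Polynomial R), P ∈ S ↔ ∀ f : Γ → Polynomial R,
      jordanPhiF φ x f = 0 → jordanPhiF φ x (Matrix.vecMul f P) = 0 := fun P => Iff.rfl
  have hker : ∀ P : S, LinearMap.ker Φl ≤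
      (LinearMap.ker Φl).comap (vecMulLM (P : Matrix Γ Γ (Polynomial R))) := by
    intro P f hf
    simp only [LinearMap.mem_ker, Submodule.mem_comap, vecMulLM_apply] at *
    exact P.2 f hf
  let e := Φl.quotKerEquivOfSurjective hsurj
  have he : ∀ f, e (Submodule.Quotient.mk f) = Φl f := fun f => rfl
  let ψ : S → Module.End R M := fun P =>
    e.toLinearMap ∘ₗ Submodule.mapQ _ _ (vecMulLM (P : Matrix Γ Γ (Polynomial R))) (hker P)
      ∘ₗ e.symm.toLinearMap
  have hψ : ∀ (P : S) (f : Γ → Polynomial R),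
      ψ P (Φl f) = Φl (Matrix.vecMul f (P : Matrix Γ Γ (Polynomial R))) := by
    intro P f
    show e (Submodule.mapQ _ _ _ (hker P) (e.symm (Φl f))) = _
    have h1 : e.symm (Φl f) = Submodule.Quotient.mk f := by
      rw [← he f, LinearEquiv.symm_apply_apply]
    rw [h1, Submodule.mapQ_apply, vecMulLM_apply, he]
  have hext : ∀ g₁ g₂ : Module.End R M, (∀ f, g₁ (Φl f) = g₂ (Φl f)) → g₁ = g₂ := by
    intro g₁ g₂ hg
    ext u
    obtain ⟨f, rfl⟩ := hsurj u
    exact hg f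
  refine ⟨S, hmemS, ⟨{ toFun := (fun P => ψ P.unop),
                       map_one' := ?_, map_mul' := ?_, map_zero' := ?_,
                       map_add' := ?_, commutes' := ?_ }, ?_, ?_⟩⟩
  · refine hext _ _ fun f => ?_
    rw [hψ, MulOpposite.unop_one, OneMemClass.coe_one, Matrix.vecMul_one,
      Module.End.one_apply]
  · intro a b
    refine hext _ _ fun f => ?_
    rw [hψ, Module.End.mul_apply, hψ, hψ, MulOpposite.unop_mul, MulMemClass.coe_mul,
      Matrix.vecMul_vecMul]
  · refine hext _ _ fun f => ?_
    rw [hψ, MulOpposite.unop_zero, ZeroMemClass.coe_zero, Matrix.vecMul_zero,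
      map_zero, LinearMap.zero_apply]
  · intro a b
    refine hext _ _ fun f => ?_
    rw [hψ, LinearMap.add_apply, hψ, hψ, MulOpposite.unop_add, AddMemClass.coe_add,
      Matrix.vecMul_add, map_add]
  · intro c
    refine hext _ _ fun f => ?_
    have hd : Matrix.vecMul f
        ((((algebraMap (Subring.center R) (↥S)ᵐᵒᵖ) c).unop : S) : Matrix Γ Γ (Polynomial R))
        = fun γ => f γ * Polynomial.C (c : R) := by
      rw [MulOpposite.algebraMap_apply, MulOpposite.unop_op]
      funext j
      rw [Subalgebra.coe_algebraMap, Matrix.algebraMap_eq_diagonal, Matrix.vecMul_diagonal]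
      congr 1
    rw [hψ, hd, ← hΦF, jordanPhi_mul_C φ x (c : R) c.2 f, hΦF,
      Module.algebraMap_end_apply]
    rfl
  · intro P
    refine hext _ _ fun f => ?_
    show (ψ P * φ) (Φl f) = (φ * ψ P) (Φl f)
    rw [Module.End.mul_apply, Module.End.mul_apply, hX, hψ, hψ, vecMul_X_smul, ← hX]
  · intro P f
    exact hψ P f
end

section
/- Let D be a division ring finite-dimensional over its center K = Z(D), and let φ be a nilpotent D-linear endomorphism of a finite-dimensional left D-vector space M. Then C_φ is a K-subspace of Hom_D(M,M) and dim_K(C_φ) ≤ dim_K(D) · dim_D(ker φ) · dim_D(M). -/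
open Polynomial

set_option synthInstance.maxHeartbeats 1000000
set_option maxHeartbeats 1000000

/-- If `D` is a division ring finite-dimensional over its center `K = Z(D)` and `φ` is a
nilpotent `D`-linear endomorphism of a finite-dimensional left `D`-vector space `M`, then the
centralizer `C_φ` (a `K`-subalgebra, hence `K`-subspace, of `Hom_D(M,M)`) satisfies
`dim_K C_φ ≤ dim_K D · dim_D (ker φ) · dim_D M`. -/
theorem stmt_15 {D : Type*} [DivisionRing D] [FiniteDimensional (Subring.center D) D]
    {M : Type*} [AddCommGroup M] [Module D M] [FiniteDimensional D M]
    (φ : Module.End D M) (hφ : IsNilpotent φ) :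
    Module.finrank (Subring.center D)
        ↥(Subalgebra.centralizer (Subring.center D) ({φ} : Set (Module.End D M))) ≤
      Module.finrank (Subring.center D) D * Module.finrank D ↥(LinearMap.ker φ) *
        Module.finrank D M := by
  classical
  set K := Subring.center D with hK
  haveI : FiniteDimensional K M := Module.Finite.trans D M
  obtain ⟨n, hn⟩ := hφ
  set k := Module.finrank D (M ⧸ LinearMap.range φ) with hk
  let b := Module.finBasis D (M ⧸ LinearMap.range φ)
  choose v hv using fun i : Fin k => Submodule.Quotient.mk_surjective (LinearMap.range φ) (b i)
  set N : Submodule D M := Submodule.span D (Set.range fun p : Fin k × ℕ => (φ ^ p.2) (v p.1))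
    with hN
  have hgen : ∀ (l : Fin k) (j : ℕ), (φ ^ j) (v l) ∈ N :=
    fun l j => Submodule.subset_span ⟨(l, j), rfl⟩
  have key : ∀ i : ℕ, ∀ x : M, (φ ^ (n - i)) x ∈ N := by
    intro i
    induction i with
    | zero =>
      intro x
      simp only [Nat.sub_zero, hn]
      simp
    | succ i ih =>
      intro x
      by_cases h : n ≤ i
      · have he : n - (i + 1) = n - i := by omega
        rw [he]; exact ih x
      · set m := n - (i + 1) with hm
        have hmi : n - i = m + 1 := by omega
        set c := b.repr (Submodule.Quotient.mk x) with hc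
        have hmk : Submodule.Quotient.mk (p := LinearMap.range φ)
            (x - ∑ l, c l • v l) = 0 := by
          rw [Submodule.Quotient.mk_sub]
          have : (Submodule.Quotient.mk (p := LinearMap.range φ) (∑ l, c l • v l)) =
              ∑ l, c l • b l := by
            rw [← Submodule.mkQ_apply, map_sum]
            simp only [map_smul, Submodule.mkQ_apply, hv]
          rw [this, ← b.sum_repr (Submodule.Quotient.mk x)]
          simp [hc]
        rw [Submodule.Quotient.mk_eq_zero] at hmk
        obtain ⟨y, hy⟩ := hmk
        have hx : x = (∑ l, c l • v l) + φ y := by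
          rw [hy]; abel
        rw [hx, map_add]
        refine Submodule.add_mem _ ?_ ?_
        · rw [map_sum]
          refine Submodule.sum_mem _ fun l _ => ?_
          rw [map_smul]
          exact Submodule.smul_mem _ _ (hgen l m)
        · have : (φ ^ m) (φ y) = (φ ^ (n - i)) y := by
            rw [hmi, pow_succ, Module.End.mul_apply]
          rw [this]
          exact ih y
  have hNtop : N = ⊤ := by
    rw [eq_top_iff]
    intro x _
    have := key n x
    simpa using this
  let E : (Subalgebra.centralizer K ({φ} : Set (Module.End D M))) →ₗ[K] (Fin k → M) :=
    { toFun := fun ψ l => (ψ : Module.End D M) (v l)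
      map_add' := by intro ψ χ; funext l; simp
      map_smul' := by intro c ψ; funext l; simp }
  have hinj : Function.Injective E := by
    rw [injective_iff_map_eq_zero]
    intro ψ hψ
    have hcomm : Commute (ψ : Module.End D M) φ := by
      have := ψ.2
      rw [Subalgebra.mem_centralizer_iff] at this
      exact (this φ (Set.mem_singleton φ)).symm
    have hval : ∀ l, (ψ : Module.End D M) (v l) = 0 := fun l => congrFun hψ l
    have hzero : (ψ : Module.End D M) = 0 := by
      ext x
      have hx : x ∈ N := hNtop ▸ Submodule.mem_top
      refine Submodule.span_induction ?_ ?_ ?_ ?_ hx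
      · rintro _ ⟨⟨l, j⟩, rfl⟩
        have h1 : (ψ : Module.End D M) ((φ ^ j) (v l)) =
            (φ ^ j) ((ψ : Module.End D M) (v l)) := by
          have := (hcomm.pow_right j)
          calc (ψ : Module.End D M) ((φ ^ j) (v l))
              = ((ψ : Module.End D M) * φ ^ j) (v l) := rfl
            _ = (φ ^ j * (ψ : Module.End D M)) (v l) := by rw [this]
            _ = (φ ^ j) ((ψ : Module.End D M) (v l)) := rfl
        simp [h1, hval]
      · simp
      · intro a b _ _ ha hb; simp [ha, hb]
      · intro d a _ ha; simp [ha]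
    exact Subtype.ext hzero
  haveI : FiniteDimensional K (Fin k → M) := inferInstance
  have h1 : Module.finrank K
      ↥(Subalgebra.centralizer K ({φ} : Set (Module.End D M))) ≤
      Module.finrank K (Fin k → M) :=
    LinearMap.finrank_le_finrank_of_injective hinj
  have h2 : Module.finrank K (Fin k → M) = k * Module.finrank K M := by
    rw [Module.finrank_pi_fintype]
    simp [Finset.sum_const, Fintype.card_fin]
  have h3 : k = Module.finrank D (LinearMap.ker φ) := by
    have e1 := Submodule.finrank_quotient_add_finrank (LinearMap.range φ)
    have e2 := LinearMap.finrank_range_add_finrank_ker φ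
    omega
  have h4 : Module.finrank K D * Module.finrank D M = Module.finrank K M :=
    Module.finrank_mul_finrank _ _ _
  calc Module.finrank K ↥(Subalgebra.centralizer K ({φ} : Set (Module.End D M)))
      ≤ k * Module.finrank K M := h1.trans h2.le
    _ = Module.finrank K D * Module.finrank D (LinearMap.ker φ) * Module.finrank D M := by
        rw [h3, ← h4]; ring
end

section
/- Let φ be an R-endomorphism of a left R-module M and r ≥ 1 an integer such that M = ker(φʳ) ⊕ im(φʳ). Then the map σ ↦ (σ restricted to ker(φʳ), σ restricted to im(φʳ)) defines a Z(R)-algebra isomorphism C_φ ≅ C_{φ₁} × C_{φ₂}, where φ₁ and φ₂ are the restrictions of φ to ker(φʳ) and im(φʳ) respectively. -/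
set_option maxHeartbeats 1000000 in

/-- Fitting-type decomposition of the centralizer: if `M = ker(φʳ) ⊕ im(φʳ)`, then restriction
`σ ↦ (σ|_{ker(φʳ)}, σ|_{im(φʳ)})` is a `Z(R)`-algebra isomorphism `C_φ ≅ C_{φ₁} × C_{φ₂}`,
where `φ₁`, `φ₂` are the restrictions of `φ` to `ker(φʳ)` and `im(φʳ)`. -/
theorem stmt_17 {R : Type*} [Ring R] {M : Type*} [AddCommGroup M] [Module R M]
    (φ : Module.End R M) (r : ℕ) (hr : 1 ≤ r)
    (hcompl : IsCompl (LinearMap.ker (φ ^ r)) (LinearMap.range (φ ^ r)))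
    (φ₁ : Module.End R ↥(LinearMap.ker (φ ^ r)))
    (hφ₁ : ∀ u : ↥(LinearMap.ker (φ ^ r)), (φ₁ u : M) = φ u)
    (φ₂ : Module.End R ↥(LinearMap.range (φ ^ r)))
    (hφ₂ : ∀ v : ↥(LinearMap.range (φ ^ r)), (φ₂ v : M) = φ v) :
    ∃ e : ↥(Subalgebra.centralizer (Subring.center R) ({φ} : Set (Module.End R M))) ≃ₐ[Subring.center R]
        (↥(Subalgebra.centralizer (Subring.center R)
            ({φ₁} : Set (Module.End R ↥(LinearMap.ker (φ ^ r))))) ×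
         ↥(Subalgebra.centralizer (Subring.center R)
            ({φ₂} : Set (Module.End R ↥(LinearMap.range (φ ^ r)))))),
      ∀ σ, (∀ u : ↥(LinearMap.ker (φ ^ r)), (((e σ).1 : Module.End R ↥(LinearMap.ker (φ ^ r))) u : M) = (σ : Module.End R M) u) ∧
           (∀ v : ↥(LinearMap.range (φ ^ r)), (((e σ).2 : Module.End R ↥(LinearMap.range (φ ^ r))) v : M) = (σ : Module.End R M) v) := by
  classical
  -- invariance of kernel and range under anything commuting with φ
  have hker : ∀ {σ : Module.End R M}, φ * σ = σ * φ →
      ∀ x ∈ LinearMap.ker (φ ^ r), σ x ∈ LinearMap.ker (φ ^ r) := by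
    intro σ h x hx
    have h2 : φ ^ r * σ = σ * φ ^ r := Commute.pow_left h r
    have h3 := congrArg (fun f : Module.End R M => f x) h2
    simp only [LinearMap.mem_ker] at hx ⊢
    simpa [Module.End.mul_apply, hx] using h3
  have hrange : ∀ {σ : Module.End R M}, φ * σ = σ * φ →
      ∀ x ∈ LinearMap.range (φ ^ r), σ x ∈ LinearMap.range (φ ^ r) := by
    intro σ h x hx
    obtain ⟨y, rfl⟩ := hx
    have h2 : φ ^ r * σ = σ * φ ^ r := Commute.pow_left h r
    have h3 := congrArg (fun f : Module.End R M => f y) h2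
    exact ⟨σ y, by simpa [Module.End.mul_apply] using h3⟩
  have hc : ∀ σ : ↥(Subalgebra.centralizer (Subring.center R) ({φ} : Set (Module.End R M))),
      φ * (σ : Module.End R M) = (σ : Module.End R M) * φ :=
    fun σ => (Subalgebra.mem_centralizer_iff _).1 σ.2 φ rfl
  -- restriction maps
  let res₁ : ∀ _ : ↥(Subalgebra.centralizer (Subring.center R) ({φ} : Set (Module.End R M))),
      Module.End R ↥(LinearMap.ker (φ ^ r)) := fun σ => (σ : Module.End R M).restrict (hker (hc σ))
  let res₂ : ∀ _ : ↥(Subalgebra.centralizer (Subring.center R) ({φ} : Set (Module.End R M))),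
      Module.End R ↥(LinearMap.range (φ ^ r)) := fun σ => (σ : Module.End R M).restrict (hrange (hc σ))
  have hres₁ : ∀ σ u, ((res₁ σ) u : M) = (σ : Module.End R M) u := fun σ u => rfl
  have hres₂ : ∀ σ v, ((res₂ σ) v : M) = (σ : Module.End R M) v := fun σ v => rfl
  have hmem₁ : ∀ σ, res₁ σ ∈ Subalgebra.centralizer (Subring.center R)
      ({φ₁} : Set (Module.End R ↥(LinearMap.ker (φ ^ r)))) := by
    intro σ
    rw [Subalgebra.mem_centralizer_iff]
    intro g hg
    rw [Set.mem_singleton_iff] at hg; rw [hg]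
    refine LinearMap.ext fun u => Subtype.ext ?_
    have := congrArg (fun f : Module.End R M => f (u : M)) (hc σ)
    simp only [Module.End.mul_apply, hφ₁, hres₁] at *
    simpa [hφ₁, hres₁] using this
  have hmem₂ : ∀ σ, res₂ σ ∈ Subalgebra.centralizer (Subring.center R)
      ({φ₂} : Set (Module.End R ↥(LinearMap.range (φ ^ r)))) := by
    intro σ
    rw [Subalgebra.mem_centralizer_iff]
    intro g hg
    rw [Set.mem_singleton_iff] at hg; rw [hg]
    refine LinearMap.ext fun v => Subtype.ext ?_
    have := congrArg (fun f : Module.End R M => f (v : M)) (hc σ)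
    simp only [Module.End.mul_apply, hφ₂, hres₂] at *
    simpa [hφ₂, hres₂] using this
  -- projections
  let π₁ : M →ₗ[R] ↥(LinearMap.ker (φ ^ r)) :=
    (LinearMap.ker (φ ^ r)).projectionOnto _ hcompl
  let π₂ : M →ₗ[R] ↥(LinearMap.range (φ ^ r)) :=
    (LinearMap.range (φ ^ r)).projectionOnto _ hcompl.symm
  have hsum : ∀ x : M, (π₁ x : M) + (π₂ x : M) = x := fun x =>
    Submodule.projection_add_projection_eq_self hcompl x
  have hπ₁φ : ∀ x : M, π₁ (φ x) = φ₁ (π₁ x) := by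
    intro x
    have hx : φ x = ((φ₁ (π₁ x) : M) + (φ₂ (π₂ x) : M)) := by
      rw [hφ₁, hφ₂, ← map_add, hsum]
    rw [hx, map_add]
    simp [π₁]
  have hπ₂φ : ∀ x : M, π₂ (φ x) = φ₂ (π₂ x) := by
    intro x
    have hx : φ x = ((φ₁ (π₁ x) : M) + (φ₂ (π₂ x) : M)) := by
      rw [hφ₁, hφ₂, ← map_add, hsum]
    rw [hx, map_add]
    simp [π₂]
  -- gluing map
  let glue : Module.End R ↥(LinearMap.ker (φ ^ r)) → Module.End R ↥(LinearMap.range (φ ^ r)) →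
      Module.End R M := fun τ₁ τ₂ =>
    (LinearMap.ker (φ ^ r)).subtype ∘ₗ τ₁ ∘ₗ π₁ + (LinearMap.range (φ ^ r)).subtype ∘ₗ τ₂ ∘ₗ π₂
  have hglue : ∀ τ₁ τ₂ x, glue τ₁ τ₂ x = ((τ₁ (π₁ x) : M) + (τ₂ (π₂ x) : M)) := fun _ _ _ => rfl
  have hgluemem : ∀ τ₁ τ₂, φ₁ * τ₁ = τ₁ * φ₁ → φ₂ * τ₂ = τ₂ * φ₂ →
      glue τ₁ τ₂ ∈ Subalgebra.centralizer (Subring.center R) ({φ} : Set (Module.End R M)) := by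
    intro τ₁ τ₂ h1 h2
    rw [Subalgebra.mem_centralizer_iff]
    intro g hg
    rw [Set.mem_singleton_iff] at hg; rw [hg]
    refine LinearMap.ext fun x => ?_
    have e1 : φ₁ (τ₁ (π₁ x)) = τ₁ (φ₁ (π₁ x)) := by
      have := congrArg (fun f : Module.End R ↥(LinearMap.ker (φ ^ r)) => f (π₁ x)) h1
      simpa [Module.End.mul_apply] using this
    have e2 : φ₂ (τ₂ (π₂ x)) = τ₂ (φ₂ (π₂ x)) := by
      have := congrArg (fun f : Module.End R ↥(LinearMap.range (φ ^ r)) => f (π₂ x)) h2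
      simpa [Module.End.mul_apply] using this
    simp only [Module.End.mul_apply, hglue, hπ₁φ, hπ₂φ, ← e1, ← e2, map_add, hφ₁, hφ₂]
  refine ⟨{ toFun := fun σ => (⟨res₁ σ, hmem₁ σ⟩, ⟨res₂ σ, hmem₂ σ⟩),
            invFun := fun τ => ⟨glue τ.1 τ.2,
              hgluemem τ.1 τ.2 ((Subalgebra.mem_centralizer_iff _).1 τ.1.2 φ₁ rfl)
                ((Subalgebra.mem_centralizer_iff _).1 τ.2.2 φ₂ rfl)⟩,
            left_inv := ?_, right_inv := ?_, map_mul' := ?_, map_add' := ?_,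
            commutes' := ?_ }, fun σ => ⟨fun u => rfl, fun v => rfl⟩⟩
  · intro σ
    refine Subtype.ext (LinearMap.ext fun x => ?_)
    simp only [hglue, hres₁, hres₂, ← map_add, hsum]
  · intro τ
    refine Prod.ext (Subtype.ext (LinearMap.ext fun u => Subtype.ext ?_))
      (Subtype.ext (LinearMap.ext fun v => Subtype.ext ?_))
    · show glue τ.1.1 τ.2.1 (u : M) = _
      rw [hglue]
      have h1 : π₁ (u : M) = u := Submodule.projectionOnto_apply_left hcompl u
      have h2 : π₂ (u : M) = 0 :=
        Submodule.projectionOnto_apply_right hcompl.symm u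
      rw [h1, h2, map_zero]
      simp
    · show glue τ.1.1 τ.2.1 (v : M) = _
      rw [hglue]
      have h1 : π₁ (v : M) = 0 :=
        Submodule.projectionOnto_apply_right hcompl v
      have h2 : π₂ (v : M) = v := Submodule.projectionOnto_apply_left hcompl.symm v
      rw [h1, h2, map_zero]
      simp
  · intro σ τ
    refine Prod.ext (Subtype.ext (LinearMap.ext fun u => Subtype.ext ?_))
      (Subtype.ext (LinearMap.ext fun v => Subtype.ext ?_)) <;> rfl
  · intro σ τ
    refine Prod.ext (Subtype.ext (LinearMap.ext fun u => Subtype.ext ?_))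
      (Subtype.ext (LinearMap.ext fun v => Subtype.ext ?_)) <;> rfl
  · intro c
    refine Prod.ext (Subtype.ext (LinearMap.ext fun u => Subtype.ext ?_))
      (Subtype.ext (LinearMap.ext fun v => Subtype.ext ?_)) <;>
      simp [res₁, res₂, Module.algebraMap_end_apply]
end

section
/- Let K be an algebraically closed field, V a finite-dimensional K-vector space, φ: V → V a K-linear map with eigenvalues λ₁,…,λ_p, and set m_i = dim ker(φ − λ_i·1_V). Then there exist K-subalgebras M_i ⊆ M_{m_i×m_i}(K[t]) for 1 ≤ i ≤ p such that the centralizer C_φ is a homomorphic image of the direct product K-algebra M₁ × M₂ × ⋯ × M_p. -/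
open Polynomial Module
open Function LinearMap

/-- Nakayama-style generation for nilpotent maps. -/
lemma gen_aux {K W : Type*} [Field K] [AddCommGroup W] [Module K W]
    (N : Module.End K W) (n : ℕ) (hn : N ^ n = 0) (T : Submodule K W)
    (hstab : ∀ x ∈ T, N x ∈ T) (S : Set W) (hS : S ⊆ T)
    (hgen : Submodule.span K S ⊔ LinearMap.range N = ⊤) : T = ⊤ := by
  have hspanT : Submodule.span K S ≤ T := Submodule.span_le.mpr hS
  have hpow : ∀ a : ℕ, ∀ x ∈ T, (N ^ a) x ∈ T := by
    intro a
    induction a with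
    | zero => simpa using fun x hx => hx
    | succ a ih =>
      intro x hx
      have : (N ^ (a + 1)) x = N ((N ^ a) x) := by
        rw [pow_succ']; rfl
      rw [this]
      exact hstab _ (ih x hx)
  have step : ∀ k : ℕ, LinearMap.range (N ^ (k + 1)) ≤ T →
      LinearMap.range (N ^ k) ≤ T := by
    intro k hk
    rintro x ⟨y, rfl⟩
    have hy : y ∈ Submodule.span K S ⊔ LinearMap.range N := by
      rw [hgen]; trivial
    obtain ⟨s, hs, z, hz, rfl⟩ := Submodule.mem_sup.mp hy
    obtain ⟨w, rfl⟩ := hz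
    have heq : (N ^ k) (s + N w) = (N ^ k) s + (N ^ (k + 1)) w := by
      rw [map_add, pow_succ]; rfl
    rw [heq]
    exact T.add_mem (hpow k s (hspanT hs)) (hk ⟨w, rfl⟩)
  have desc : ∀ d : ℕ, LinearMap.range (N ^ (n - d)) ≤ T := by
    intro d
    induction d with
    | zero => simp [hn]
    | succ d ih =>
      rcases le_or_gt (d + 1) n with h | h
      · exact step (n - (d + 1)) (by rwa [show n - (d + 1) + 1 = n - d by omega])
      · rwa [show n - (d + 1) = n - d by omega]
  have := desc n
  rw [Nat.sub_self, pow_zero] at this; rw [show (1 : Module.End K W) = LinearMap.id from rfl, LinearMap.range_id] at this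
  exact top_le_iff.mp this


section KerStab

variable {R M P : Type*} [CommRing R] [AddCommGroup M] [Module R M]
  [AddCommGroup P] [Module R P]

/-- The subalgebra of endomorphisms of `P` preserving the kernel of `π`. -/
def kerStab (π : P →ₗ[R] M) : Subalgebra R (Module.End R P) where
  carrier := {F | ∀ x ∈ LinearMap.ker π, F x ∈ LinearMap.ker π}
  mul_mem' := fun {a b} ha hb x hx => ha _ (hb x hx)
  one_mem' := fun x hx => hx
  add_mem' := fun {a b} ha hb x hx => (LinearMap.ker π).add_mem (ha x hx) (hb x hx)
  zero_mem' := fun x hx => by simpa using (LinearMap.ker π).zero_mem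
  algebraMap_mem' := fun r x hx => by
    simpa [Module.algebraMap_end_eq_smul_id] using (LinearMap.ker π).smul_mem r hx

theorem mem_kerStab {π : P →ₗ[R] M} {F : Module.End R P} :
    F ∈ kerStab π ↔ ∀ x ∈ LinearMap.ker π, F x ∈ LinearMap.ker π := Iff.rfl

set_option maxHeartbeats 1000000 in
theorem kerStab_quot (π : P →ₗ[R] M) (hπ : Function.Surjective π) [Module.Projective R P] :
    ∃ ρ : (kerStab π) →ₐ[R] Module.End R M, Function.Surjective ρ := by
  classical
  let myE : (P ⧸ LinearMap.ker π) ≃ₗ[R] M :=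
    LinearEquiv.ofBijective (Submodule.liftQ (LinearMap.ker π) π le_rfl)
      ⟨by rw [← LinearMap.ker_eq_bot, Submodule.ker_liftQ_eq_bot _ _ _ le_rfl],
       by rw [← LinearMap.range_eq_top, Submodule.range_liftQ]
          exact LinearMap.range_eq_top.mpr hπ⟩
  have myE_mk : ∀ x, myE (Submodule.Quotient.mk x) = π x := fun x => rfl
  have myE_symm : ∀ x, myE.symm (π x) = Submodule.Quotient.mk x := by
    intro x
    apply myE.injective
    rw [LinearEquiv.apply_symm_apply, myE_mk]
  have hle : ∀ F : Module.End R P, F ∈ kerStab π →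
      LinearMap.ker π ≤ LinearMap.ker (π ∘ₗ F) :=
    fun F hF x hx => LinearMap.mem_ker.mpr (LinearMap.mem_ker.mp (hF x hx))
  let ρ0 : ∀ F : Module.End R P, F ∈ kerStab π → Module.End R M :=
    fun F hF => (Submodule.liftQ (LinearMap.ker π) (π ∘ₗ F) (hle F hF)) ∘ₗ
      myE.symm.toLinearMap
  have key : ∀ F hF x, ρ0 F hF (π x) = π (F x) := by
    intro F hF x
    show (Submodule.liftQ (LinearMap.ker π) (π ∘ₗ F) (hle F hF)) (myE.symm (π x)) = π (F x)
    rw [myE_symm, Submodule.liftQ_apply]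
    rfl
  have uniq : ∀ h1 h2 : Module.End R M,
      (∀ x, h1 (π x) = h2 (π x)) → h1 = h2 := by
    intro h1 h2 h
    ext w
    obtain ⟨x, rfl⟩ := hπ w
    exact h x
  have hρapp : ∀ (F : kerStab π) x, ρ0 F.1 F.2 (π x) = π (F.1 x) := fun F x => key F.1 F.2 x
  refine ⟨{ toFun := fun F => ρ0 F.1 F.2
            map_one' := uniq _ _ fun x => by
              rw [hρapp 1 x]
              rfl
            map_mul' := fun F G => uniq _ _ fun x => by
              rw [hρapp (F * G) x]
              show π (F.1 (G.1 x)) = (ρ0 F.1 F.2) ((ρ0 G.1 G.2) (π x))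
              rw [hρapp G x, hρapp F (G.1 x)]
            map_zero' := uniq _ _ fun x => by
              rw [hρapp 0 x]
              show π 0 = 0
              exact map_zero π
            map_add' := fun F G => uniq _ _ fun x => by
              rw [hρapp (F + G) x]
              show π (F.1 x + G.1 x) = (ρ0 F.1 F.2) (π x) + (ρ0 G.1 G.2) (π x)
              rw [hρapp F x, hρapp G x, map_add]
            commutes' := fun r => uniq _ _ fun x => by
              rw [hρapp (algebraMap R (kerStab π) r) x]
              show π (r • x) = r • (π x)
              exact map_smul π r x }, ?_⟩
  intro h
  obtain ⟨F, hF⟩ := Module.projective_lifting_property π (h ∘ₗ π) hπ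
  have hFmem : F ∈ kerStab π := by
    intro x hx
    have hx' : π x = 0 := hx
    have hcc : π (F x) = h (π x) := by
      rw [← LinearMap.comp_apply, hF]
      rfl
    rw [LinearMap.mem_ker, hcc, hx', map_zero]
  refine ⟨⟨F, hFmem⟩, ?_⟩
  refine uniq _ _ fun x => ?_
  show ρ0 F hFmem (π x) = h (π x)
  rw [key F hFmem x]
  rw [← LinearMap.comp_apply, hF]
  rfl

end KerStab

section Chi

variable {K W : Type*} [Field K] [AddCommGroup W] [Module K W]

/-- The centralizer of `f` is isomorphic (here: surjective image) to the
`K[X]`-endomorphisms of `AEval' f`. -/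
theorem chi_exists (f : Module.End K W) :
    ∃ χ : Module.End K[X] (AEval' f) →ₐ[K]
      (Subalgebra.centralizer K ({f} : Set (Module.End K W))),
      Function.Surjective χ := by
  classical
  let ofL : W ≃ₗ[K] AEval' f := AEval'.of f
  let χ0 : Module.End K[X] (AEval' f) → Module.End K W := fun F =>
    ofL.symm.toLinearMap ∘ₗ (LinearMap.restrictScalars K F) ∘ₗ ofL.toLinearMap
  have hχcomm : ∀ F, f * χ0 F = χ0 F * f := by
    intro F
    ext w
    show f (ofL.symm (F (ofL w))) = ofL.symm (F (ofL (f w)))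
    have h1 : ofL (f w) = (X : K[X]) • ofL w := (AEval'.X_smul_of f w).symm
    rw [h1, map_smul, Module.AEval.of_symm_X_smul]
    rfl
  refine ⟨{ toFun := fun F => ⟨χ0 F, by
              rw [Subalgebra.mem_centralizer_iff]
              rintro g rfl
              exact hχcomm F⟩
            map_one' := Subtype.ext (by
              ext w
              show ofL.symm ((1 : Module.End K[X] (AEval' f)) (ofL w)) = w
              simp)
            map_mul' := fun F G => Subtype.ext (by
              ext w
              show ofL.symm (F (G (ofL w))) = ofL.symm (F (ofL (ofL.symm (G (ofL w)))))
              rw [LinearEquiv.apply_symm_apply])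
            map_zero' := Subtype.ext (by
              ext w
              show ofL.symm ((0 : Module.End K[X] (AEval' f)) (ofL w)) = 0
              simp)
            map_add' := fun F G => Subtype.ext (by
              ext w
              show ofL.symm ((F + G) (ofL w)) = ofL.symm (F (ofL w)) + ofL.symm (G (ofL w))
              rw [LinearMap.add_apply, map_add])
            commutes' := fun k => Subtype.ext (by
              ext w
              show ofL.symm (((algebraMap K (Module.End K[X] (AEval' f))) k) (ofL w)) = k • w
              rw [Module.algebraMap_end_eq_smul_id]
              show ofL.symm (k • ofL w) = k • w
              rw [map_smul, LinearEquiv.symm_apply_apply]) }, ?_⟩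
  rintro ⟨F, hFmem⟩
  rw [Subalgebra.mem_centralizer_iff] at hFmem
  have hcomm : f * F = F * f := hFmem f rfl
  have hcomm' : ∀ w, F (f w) = f (F w) := fun w => by
    have := congrArg (fun (h : Module.End K W) => h w) hcomm
    exact this.symm
  have hfc : ∀ w : W, (ofL.toLinearMap ∘ₗ F) (f • w) =
      (X : K[X]) • (ofL.toLinearMap ∘ₗ F) w := fun w => by
    show ofL (F (f w)) = (X : K[X]) • ofL (F w)
    rw [hcomm', AEval'.X_smul_of]
  refine ⟨LinearMap.ofAEval f (ofL.toLinearMap ∘ₗ F) hfc, Subtype.ext ?_⟩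
  ext w
  show ofL.symm ((LinearMap.ofAEval f (ofL.toLinearMap ∘ₗ F) hfc) (ofL w)) = F w
  have hG : (LinearMap.ofAEval f (ofL.toLinearMap ∘ₗ F) hfc) (ofL w) = ofL (F w) := rfl
  rw [hG, LinearEquiv.symm_apply_apply]

end Chi

section RestrMap

variable (R : Type*) {S A B : Type*} [CommRing R] [CommRing S] [Algebra R S]
  [Ring A] [Ring B] [Algebra S A] [Algebra S B] [Algebra R A] [Algebra R B]
  [IsScalarTower R S A] [IsScalarTower R S B]

theorem restr_map_exists (α : A ≃ₐ[S] B) (Sa : Subalgebra S A) :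
    ∃ ι : (Subalgebra.restrictScalars R (Sa.map (α : A →ₐ[S] B))) →ₐ[R] Sa,
      Function.Surjective ι := by
  have hmem : ∀ x : (Subalgebra.restrictScalars R (Sa.map (α : A →ₐ[S] B))),
      α.symm x.1 ∈ Sa := by
    rintro ⟨x, hx⟩
    rw [Subalgebra.mem_restrictScalars] at hx
    obtain ⟨y, hy, rfl⟩ := hx
    simpa using hy
  refine ⟨{ toFun := fun x => ⟨α.symm x.1, hmem x⟩
            map_one' := Subtype.ext (by simp)
            map_mul' := fun x y => Subtype.ext (by simp)
            map_zero' := Subtype.ext (by simp)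
            map_add' := fun x y => Subtype.ext (by simp)
            commutes' := fun k => by
              apply Subtype.ext
              have h1 : ((algebraMap R (Subalgebra.restrictScalars R
                  (Sa.map (α : A →ₐ[S] B))) k) : B) = algebraMap R B k := rfl
              have h2 : ((algebraMap R Sa k) : A) = algebraMap R A k := rfl
              show α.symm ((algebraMap R (Subalgebra.restrictScalars R
                  (Sa.map (α : A →ₐ[S] B))) k : B)) = ((algebraMap R Sa k) : A)
              rw [h1, h2, IsScalarTower.algebraMap_apply R S B k, AlgEquiv.commutes,
                ← IsScalarTower.algebraMap_apply] }, ?_⟩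
  intro F
  have hx : α F.1 ∈ Subalgebra.restrictScalars R (Sa.map (α : A →ₐ[S] B)) := by
    rw [Subalgebra.mem_restrictScalars]
    exact ⟨F.1, F.2, rfl⟩
  exact ⟨⟨α F.1, hx⟩, Subtype.ext (by simp)⟩

end RestrMap

lemma aux_matrix {K : Type*} [Field K] {W : Type*} [AddCommGroup W] [Module K W]
    [FiniteDimensional K W] (f : Module.End K W) (lm : K)
    (hnil : IsNilpotent (f - lm • 1)) (m : ℕ)
    (hm : m = Module.finrank K (LinearMap.ker (f - lm • 1))) :
    ∃ M : Subalgebra K (Matrix (Fin m) (Fin m) K[X]),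
      ∃ Φ : M →ₐ[K] (Subalgebra.centralizer K ({f} : Set (Module.End K W))),
        Function.Surjective Φ := by
  classical
  set N : Module.End K W := f - lm • 1 with hNdef
  obtain ⟨n, hn⟩ := hnil
  -- generators
  have hq : Module.finrank K (W ⧸ LinearMap.range N) = m := by
    have h1 := Submodule.finrank_quotient_add_finrank (LinearMap.range N)
    have h2 := LinearMap.finrank_range_add_finrank_ker N
    omega
  let b : Basis (Fin m) K (W ⧸ LinearMap.range N) := Module.finBasisOfFinrankEq K _ hq
  let g : Fin m → W := fun j =>
    Function.surjInv (Submodule.mkQ_surjective (LinearMap.range N)) (b j)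
  have hg : ∀ j, Submodule.mkQ (LinearMap.range N) (g j) = b j := fun j =>
    Function.surjInv_eq _ _
  have hmap : Submodule.map (Submodule.mkQ (LinearMap.range N))
      (Submodule.span K (Set.range g)) = ⊤ := by
    rw [Submodule.map_span, ← Set.range_comp]
    have : (Submodule.mkQ (LinearMap.range N)) ∘ g = b := funext hg
    rw [this, b.span_eq]
  have hgen : Submodule.span K (Set.range g) ⊔ LinearMap.range N = ⊤ := by
    have h := congrArg (Submodule.comap (Submodule.mkQ (LinearMap.range N))) hmap
    rwa [Submodule.comap_map_eq, Submodule.ker_mkQ, Submodule.comap_top] at h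
  -- the K[X]-module
  let gx : Fin m → AEval' f := fun j => AEval'.of f (g j)
  let T : Submodule K[X] (AEval' f) := Submodule.span K[X] (Set.range gx)
  have hT : ∀ w : W, AEval'.of f w ∈ T := by
    have hT' : Submodule.comap ((AEval'.of f).toLinearMap : W →ₗ[K] AEval' f)
        (T.restrictScalars K) = ⊤ := by
      refine gen_aux N n hn _ ?_ (Set.range g) ?_ hgen
      · intro x hx
        simp only [Submodule.mem_comap, Submodule.restrictScalars_mem] at hx ⊢
        have hx' : (AEval'.of f) x ∈ T := hx
        show (AEval'.of f) (N x) ∈ T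
        have heq : (AEval'.of f) (N x) =
            (X : K[X]) • ((AEval'.of f) x) - (C lm) • ((AEval'.of f) x) := by
          have h1 : (X : K[X]) • ((AEval'.of f) x) = (AEval'.of f) (f x) :=
            AEval'.X_smul_of f x
          have h2 : (C lm) • ((AEval'.of f) x) = lm • ((AEval'.of f) x) :=
            Module.AEval.C_smul f lm _
          rw [h1, h2, ← map_smul, ← map_sub]
          rfl
        rw [heq]
        exact T.sub_mem (T.smul_mem _ hx') (T.smul_mem _ hx')
      · intro x hx
        obtain ⟨j, rfl⟩ := hx
        show (AEval'.of f) (g j) ∈ T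
        exact Submodule.subset_span ⟨j, rfl⟩
    intro w
    have : w ∈ Submodule.comap ((AEval'.of f).toLinearMap : W →ₗ[K] AEval' f)
        (T.restrictScalars K) := by rw [hT']; trivial
    simpa using this
  have hspan : T = ⊤ := by
    rw [eq_top_iff]
    intro x _
    have := hT ((AEval'.of f).symm x)
    simpa using this
  -- the surjection π from the free module
  let π : (Fin m → K[X]) →ₗ[K[X]] AEval' f := Fintype.linearCombination K[X] gx
  have hπ : Function.Surjective π := by
    rw [← LinearMap.range_eq_top, Fintype.range_linearCombination]
    exact hspan
  obtain ⟨ρ, hρsurj⟩ := kerStab_quot π hπ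
  obtain ⟨χ, hχsurj⟩ := chi_exists f
  obtain ⟨ι, hιsurj⟩ := restr_map_exists K
    (LinearMap.toMatrixAlgEquiv (Pi.basisFun K[X] (Fin m))) (kerStab π)
  exact ⟨_, χ.comp ((ρ.restrictScalars K).comp ι), hχsurj.comp (hρsurj.comp hιsurj)⟩

section PartB
open scoped DirectSum

variable {K V : Type*} [Field K] [AddCommGroup V] [Module K V]

set_option maxHeartbeats 1000000 in
theorem centralizer_pi (φ : Module.End K V) (p : ℕ) (W' : Fin p → Submodule K V)
    (hWinv : ∀ i, Set.MapsTo φ (W' i) (W' i))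
    (hInternal : DirectSum.IsInternal W')
    (hstab : ∀ F : Module.End K V, φ * F = F * φ → ∀ i, Set.MapsTo F (W' i) (W' i)) :
    ∃ Θ : ((i : Fin p) → (Subalgebra.centralizer K
        ({LinearMap.restrict φ (hWinv i)} : Set (Module.End K (W' i))))) →ₐ[K]
      (Subalgebra.centralizer K ({φ} : Set (Module.End K V))),
      Function.Surjective Θ := by
  classical
  let e : (⨁ i, ↥(W' i)) ≃ₗ[K] V :=
    LinearEquiv.ofBijective (DirectSum.coeLinearMap W') hInternal
  have he : ∀ (i) (x : ↥(W' i)),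
      e (DirectSum.lof K (Fin p) (fun i => ↥(W' i)) i x) = ↑x := by
    intro i x
    show (DirectSum.coeLinearMap W') (DirectSum.lof K (Fin p) (fun i => ↥(W' i)) i x) = ↑x
    rw [DirectSum.lof_eq_of, DirectSum.coeLinearMap_of]
  let A : (∀ i, Module.End K ↥(W' i)) → Module.End K (⨁ i, ↥(W' i)) := fun f =>
    DirectSum.toModule K (Fin p) _ (fun i => (DirectSum.lof K (Fin p) (fun i => ↥(W' i)) i) ∘ₗ f i)
  have hA : ∀ (f) (i) (x : ↥(W' i)),
      A f (DirectSum.lof K (Fin p) (fun i => ↥(W' i)) i x) =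
        DirectSum.lof K (Fin p) (fun i => ↥(W' i)) i (f i x) := by
    intro f i x
    exact DirectSum.toModule_lof (R := K) (ι := Fin p)
      (φ := fun i => (DirectSum.lof K (Fin p) (fun i => ↥(W' i)) i) ∘ₗ f i) i x
  let Θ0 : (∀ i, Module.End K ↥(W' i)) → Module.End K V := fun f =>
    e.toLinearMap ∘ₗ (A f) ∘ₗ e.symm.toLinearMap
  have hΘ0 : ∀ f d, Θ0 f (e d) = e (A f d) := by
    intro f d
    show e (A f (e.symm (e d))) = e (A f d)
    rw [LinearEquiv.symm_apply_apply]
  have ext_lof : ∀ g h : Module.End K V,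
      (∀ (i) (x : ↥(W' i)), g (e (DirectSum.lof K (Fin p) (fun i => ↥(W' i)) i x)) =
        h (e (DirectSum.lof K (Fin p) (fun i => ↥(W' i)) i x))) → g = h := by
    intro g h hgh
    have h2 : g ∘ₗ e.toLinearMap = h ∘ₗ e.toLinearMap := by
      apply DirectSum.linearMap_ext
      intro i
      ext x
      exact hgh i x
    ext v
    obtain ⟨d, rfl⟩ := e.surjective v
    exact DFunLike.congr_fun h2 d
  have hone0 : Θ0 (1 : ∀ i, Module.End K ↥(W' i)) = 1 := by
    apply ext_lof
    intro i x
    rw [hΘ0, hA]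
    rfl
  have hmul0 : ∀ f g, Θ0 (f * g) = Θ0 f * Θ0 g := by
    intro f g
    apply ext_lof
    intro i x
    rw [hΘ0, hA, Module.End.mul_apply, hΘ0, hA, hΘ0, hA]
    rfl
  have hzero0 : Θ0 (0 : ∀ i, Module.End K ↥(W' i)) = 0 := by
    apply ext_lof
    intro i x
    rw [hΘ0, hA]
    show e ((DirectSum.lof K (Fin p) (fun i => ↥(W' i)) i) 0) = 0
    rw [map_zero, map_zero]
  have hadd0 : ∀ f g, Θ0 (f + g) = Θ0 f + Θ0 g := by
    intro f g
    apply ext_lof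
    intro i x
    rw [hΘ0, hA]
    show e ((DirectSum.lof K (Fin p) (fun i => ↥(W' i)) i) (f i x + g i x)) = _
    rw [map_add, map_add, LinearMap.add_apply, hΘ0, hA, hΘ0, hA]
  have halg0 : ∀ k : K, Θ0 (fun _ => k • 1) = k • 1 := by
    intro k
    apply ext_lof
    intro i x
    rw [hΘ0, hA]
    show e ((DirectSum.lof K (Fin p) (fun i => ↥(W' i)) i) (k • x)) = _
    rw [map_smul, map_smul]
    rfl
  have hφ0 : Θ0 (fun i => LinearMap.restrict φ (hWinv i)) = φ := by
    apply ext_lof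
    intro i x
    rw [hΘ0, hA, he, he]
    exact LinearMap.restrict_coe_apply φ (hWinv i) x
  refine ⟨{ toFun := fun f => ⟨Θ0 (fun i => ((f i : Module.End K ↥(W' i)))), by
              rw [Subalgebra.mem_centralizer_iff]
              intro g hg
              rw [Set.eq_of_mem_singleton hg]
              have hcomm : ∀ i, (LinearMap.restrict φ (hWinv i)) * ((f i : Module.End K ↥(W' i)))
                  = ((f i : Module.End K ↥(W' i))) * (LinearMap.restrict φ (hWinv i)) := by
                intro i
                have := (f i).2
                rw [Subalgebra.mem_centralizer_iff] at this
                exact this _ rfl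
              calc φ * Θ0 (fun i => ((f i : Module.End K ↥(W' i))))
                  = Θ0 ((fun i => LinearMap.restrict φ (hWinv i)) *
                      (fun i => ((f i : Module.End K ↥(W' i))))) := by
                    rw [hmul0, hφ0]
                _ = Θ0 ((fun i => ((f i : Module.End K ↥(W' i)))) *
                      (fun i => LinearMap.restrict φ (hWinv i))) := by
                    congr 1
                    funext i
                    exact hcomm i
                _ = Θ0 (fun i => ((f i : Module.End K ↥(W' i)))) * φ := by
                    rw [hmul0, hφ0]⟩
            map_one' := Subtype.ext (by
              show Θ0 (fun i => ((1 : Module.End K ↥(W' i)))) = 1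
              exact hone0)
            map_mul' := fun f g => Subtype.ext (by
              show Θ0 _ = Θ0 _ * Θ0 _
              rw [← hmul0]
              rfl)
            map_zero' := Subtype.ext (by
              show Θ0 (fun i => ((0 : Module.End K ↥(W' i)))) = 0
              exact hzero0)
            map_add' := fun f g => Subtype.ext (by
              show Θ0 _ = Θ0 _ + Θ0 _
              rw [← hadd0]
              rfl)
            commutes' := fun k => Subtype.ext (by
              show Θ0 (fun i => _) = _
              have h1 : (fun i => (((algebraMap K _ k : (∀ i, (Subalgebra.centralizer K
                  ({LinearMap.restrict φ (hWinv i)} : Set (Module.End K (W' i)))))) i :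
                    Module.End K ↥(W' i)))) = fun i : Fin p => (k • 1 : Module.End K ↥(W' i)) := rfl
              rw [h1, halg0]
              rfl) }, ?_⟩
  rintro ⟨F, hF⟩
  rw [Subalgebra.mem_centralizer_iff] at hF
  have hc : φ * F = F * φ := hF φ rfl
  have hFW := hstab F hc
  have hfm : ∀ i, F.restrict (hFW i) ∈ Subalgebra.centralizer K
      ({LinearMap.restrict φ (hWinv i)} : Set (Module.End K (W' i))) := by
    intro i
    rw [Subalgebra.mem_centralizer_iff]
    intro g hg
    rw [Set.eq_of_mem_singleton hg]
    ext x
    show φ (F ↑x) = F (φ ↑x)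
    exact DFunLike.congr_fun hc ↑x
  refine ⟨fun i => ⟨F.restrict (hFW i), hfm i⟩, Subtype.ext ?_⟩
  show Θ0 (fun i => F.restrict (hFW i)) = F
  apply ext_lof
  intro i x
  rw [hΘ0, hA, he, he]
  exact LinearMap.restrict_coe_apply F (hFW i) x

end PartB

set_option maxHeartbeats 1000000

/-- For a linear map `φ` of a finite-dimensional vector space over an algebraically closed
field `K`, with eigenvalues `λ₁,…,λ_p` and `m_i = dim ker(φ - λ_i·1)`, there exist
`K`-subalgebras `M_i ⊆ M_{m_i×m_i}(K[t])` such that the centralizer `C_φ` is a homomorphic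
image of the direct product `K`-algebra `M₁ × ⋯ × M_p`. -/
theorem stmt_18 {K : Type*} [Field K] [IsAlgClosed K]
    {V : Type*} [AddCommGroup V] [Module K V] [FiniteDimensional K V]
    (φ : Module.End K V) (p : ℕ) (lam : Fin p → K) (hinj : Function.Injective lam)
    (heig : ∀ μ : K, Module.End.HasEigenvalue φ μ ↔ ∃ i, lam i = μ)
    (m : Fin p → ℕ)
    (hm : ∀ i, m i = Module.finrank K ↥(LinearMap.ker (φ - lam i • 1))) :
    ∃ Msub : (i : Fin p) → Subalgebra K (Matrix (Fin (m i)) (Fin (m i)) (Polynomial K)),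
      ∃ Ψ : ((i : Fin p) → ↥(Msub i)) →ₐ[K]
          ↥(Subalgebra.centralizer K ({φ} : Set (Module.End K V))),
        Function.Surjective Ψ := by
  classical
  set W' : Fin p → Submodule K V := fun i => φ.maxGenEigenspace (lam i) with hW'
  have hWinv : ∀ i, Set.MapsTo φ (W' i) (W' i) := fun i =>
    Module.End.mapsTo_maxGenEigenspace_of_comm (Commute.refl φ) (lam i)
  have hT : ⨆ i, W' i = ⊤ := by
    have h1 := Module.End.iSup_maxGenEigenspace_eq_top φ
    rw [eq_top_iff, ← h1]
    apply iSup_le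
    intro μ
    by_cases hb : φ.maxGenEigenspace μ = ⊥
    · rw [hb]; exact bot_le
    · have h3 : φ.HasUnifEigenvalue μ ⊤ := hb
      have h2 : φ.HasEigenvalue μ := Module.End.HasUnifEigenvalue.lt zero_lt_one h3
      obtain ⟨i, rfl⟩ := (heig μ).mp h2
      exact le_iSup W' i
  have hInd : iSupIndep W' := (Module.End.independent_maxGenEigenspace φ).comp hinj
  have hInternal : DirectSum.IsInternal W' :=
    (DirectSum.isInternal_submodule_iff_iSupIndep_and_iSup_eq_top W').mpr ⟨hInd, hT⟩
  have hstab : ∀ F : Module.End K V, φ * F = F * φ → ∀ i, Set.MapsTo F (W' i) (W' i) :=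
    fun F hc i => Module.End.mapsTo_maxGenEigenspace_of_comm hc (lam i)
  obtain ⟨Θ, hΘ⟩ := centralizer_pi φ p W' hWinv hInternal hstab
  have hnil : ∀ i, IsNilpotent (LinearMap.restrict φ (hWinv i) - lam i • 1) := by
    intro i
    have h := Module.End.isNilpotent_restrict_maxGenEigenspace_sub_algebraMap φ (lam i)
    have heq : (φ - algebraMap K (Module.End K V) (lam i)).restrict
        (Module.End.mapsTo_maxGenEigenspace_of_comm
          (Algebra.mul_sub_algebraMap_commutes φ (lam i)) (lam i))
        = LinearMap.restrict φ (hWinv i) - lam i • 1 := by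
      ext x
      rfl
    rwa [heq] at h
  have hm' : ∀ i, m i = Module.finrank K
      (LinearMap.ker (LinearMap.restrict φ (hWinv i) - lam i • 1)) := by
    intro i
    rw [hm i]
    have hle : LinearMap.ker (φ - lam i • 1) ≤ W' i := by
      intro x hx
      rw [LinearMap.mem_ker] at hx
      show x ∈ φ.maxGenEigenspace (lam i)
      rw [Module.End.mem_maxGenEigenspace]
      exact ⟨1, by simpa [pow_one] using hx⟩
    have hco : ∀ x : ↥(W' i), ((LinearMap.restrict φ (hWinv i) - lam i • 1) x : V) =
        (φ - lam i • 1) ↑x := fun x => rfl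
    have hkereq : LinearMap.ker (LinearMap.restrict φ (hWinv i) - lam i • 1) =
        (LinearMap.ker (φ - lam i • 1)).comap (W' i).subtype := by
      ext x
      simp only [LinearMap.mem_ker, Submodule.mem_comap, Submodule.coe_subtype]
      constructor
      · intro h
        have h2 := congrArg Subtype.val h
        rw [hco] at h2
        simpa using h2
      · intro h
        apply Subtype.ext
        rw [hco]
        simpa using h
    rw [hkereq]
    exact ((Submodule.comapSubtypeEquivOfLe hle).finrank_eq).symm
  choose Msub Φ hΦ using fun i =>
    aux_matrix (LinearMap.restrict φ (hWinv i)) (lam i) (hnil i) (m i) (hm' i)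
  refine ⟨Msub, Θ.comp (Pi.algHom K _ (fun i => (Φ i).comp (Pi.evalAlgHom K _ i))), ?_⟩
  rw [AlgHom.coe_comp]
  apply hΘ.comp
  intro c
  choose d hd using fun i => hΦ i (c i)
  exact ⟨d, funext hd⟩
end
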